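/- arXiv:1904.00850 — 4 statements merged into one kernel-verified Lean document; each statement's English description precedes it below -/
import Mathlib

section
/- Let L be an RPQ over a finite alphabet A and let x, y be distinct variables. The CRPQ ∃y (x →^L y), with free variable x, is bounded if and only if L_pf is finite; and the CRPQ ∃x (x →^L y), with free variable y, is bounded if and only if L_sf is finite. -/
namespace RPQ

/-- The extended alphabet `A^±`: `Sum.inl a` is the letter `a`, `Sum.inr a` is its inverse. -/
abbrev Lett (A : Type) := A ⊕ A

/-- `OPath E u w v` holds iff there is an oriented path from `u` to `v` with label `w`
in the graph database with edge relation `E`. -/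
inductive OPath {A V : Type} (E : V → A → V → Prop) : V → List (Lett A) → V → Prop
  | nil (v : V) : OPath E v [] v
  | fwd {u v w : V} {a : A} {l : List (Lett A)} :
      E u a v → OPath E v l w → OPath E u (Sum.inl a :: l) w
  | bwd {u v w : V} {a : A} {l : List (Lett A)} :
      E v a u → OPath E v l w → OPath E u (Sum.inr a :: l) w

/-- Lift a language over `A` to the extended alphabet `A^±` (forward letters only). -/
def liftLang {A : Type} (L : Language A) : Language (Lett A) :=
  (fun w => w.map Sum.inl) '' L

/-- A language over `A^±` using only forward letters (an RPQ, rather than a 2RPQ). -/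
def ForwardLang {A : Type} (L : Language (Lett A)) : Prop :=
  ∀ w ∈ L, ∀ x ∈ w, x.isLeft = true

/-- A conjunctive two-way regular path query with free variables indexed by `ι`. -/
structure C2RPQ (A ι : Type) where
  Var : Type
  finVar : Finite Var
  free : ι → Var
  Idx : Type
  finIdx : Finite Idx
  src : Idx → Var
  tgt : Idx → Var
  lang : Idx → Language (Lett A)

attribute [instance] C2RPQ.finVar C2RPQ.finIdx

/-- Evaluation of a C2RPQ on a graph database. -/
def C2RPQ.eval {A ι : Type} (γ : C2RPQ A ι) {V : Type} (E : V → A → V → Prop)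
    (t : ι → V) : Prop :=
  ∃ h : γ.Var → V, (∀ i, h (γ.free i) = t i) ∧
    ∀ j : γ.Idx, ∃ w ∈ γ.lang j, OPath E (h (γ.src j)) w (h (γ.tgt j))

/-- A union of C2RPQs. -/
abbrev UC2RPQ (A ι : Type) := List (C2RPQ A ι)

def UC2RPQ.eval {A ι : Type} (Γ : UC2RPQ A ι) {V : Type} (E : V → A → V → Prop)
    (t : ι → V) : Prop :=
  ∃ γ ∈ Γ, γ.eval E t

/-- All languages of `Γ` are regular. -/
def UC2RPQ.Regular {A ι : Type} (Γ : UC2RPQ A ι) : Prop :=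
  ∀ γ ∈ Γ, ∀ j : γ.Idx, (γ.lang j).IsRegular

/-- `Γ` is a UCRPQ: all its languages use only forward letters. -/
def UC2RPQ.Forward {A ι : Type} (Γ : UC2RPQ A ι) : Prop :=
  ∀ γ ∈ Γ, ∀ j : γ.Idx, ForwardLang (γ.lang j)

/-- A conjunctive query: atoms are labelled by single letters, plus equality atoms. -/
structure CQ (A ι : Type) where
  Var : Type
  finVar : Finite Var
  free : ι → Var
  atoms : Set (Var × A × Var)
  eqs : Set (Var × Var)

attribute [instance] CQ.finVar

def CQ.eval {A ι : Type} (φ : CQ A ι) {V : Type} (E : V → A → V → Prop)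
    (t : ι → V) : Prop :=
  ∃ h : φ.Var → V, (∀ i, h (φ.free i) = t i) ∧
    (∀ x a y, (x, a, y) ∈ φ.atoms → E (h x) a (h y)) ∧
    (∀ x y, (x, y) ∈ φ.eqs → h x = h y)

/-- A union of conjunctive queries. -/
abbrev UCQ (A ι : Type) := List (CQ A ι)

def UCQ.eval {A ι : Type} (Φ : UCQ A ι) {V : Type} (E : V → A → V → Prop)
    (t : ι → V) : Prop :=
  ∃ φ ∈ Φ, φ.eval E t

/-- `Γ` and `Φ` agree on every (finite) graph database. -/
def EquivUCQ {A ι : Type} (Γ : UC2RPQ A ι) (Φ : UCQ A ι) : Prop :=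
  ∀ (V : Type) [Fintype V] (E : V → A → V → Prop) (t : ι → V),
    UC2RPQ.eval Γ E t ↔ UCQ.eval Φ E t

/-- A UC2RPQ is bounded if it is equivalent to some UCQ. -/
def UC2RPQ.Bounded {A ι : Type} (Γ : UC2RPQ A ι) : Prop :=
  ∃ Φ : UCQ A ι, EquivUCQ Γ Φ

/-- Containment of UC2RPQs. -/
def UC2RPQ.Contained {A ι : Type} (Γ Γ' : UC2RPQ A ι) : Prop :=
  ∀ (V : Type) [Fintype V] (E : V → A → V → Prop) (t : ι → V),
    UC2RPQ.eval Γ E t → UC2RPQ.eval Γ' E t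

/-- Equivalence relation on variables generated by the equality atoms. -/
def CQ.eqv {A ι : Type} (φ : CQ A ι) : φ.Var → φ.Var → Prop :=
  Relation.EqvGen fun x y => (x, y) ∈ φ.eqs

/-- Homomorphism between CQs (fixing the free variables pointwise). -/
def CQHom {A ι : Type} (φ ψ : CQ A ι) : Prop :=
  ∃ h : φ.Var → ψ.Var,
    (∀ i, h (φ.free i) = ψ.free i) ∧
    (∀ x y, φ.eqv x y → ψ.eqv (h x) (h y)) ∧
    ∀ x a y, (x, a, y) ∈ φ.atoms →
      ∃ x' y', (x', a, y') ∈ ψ.atoms ∧ ψ.eqv (h x) x' ∧ ψ.eqv (h y) y'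

/-- An expansion of a UC2RPQ `Γ`: a disjunct together with a chosen word for each atom. -/
structure Expansion {A ι : Type} (Γ : UC2RPQ A ι) where
  γ : C2RPQ A ι
  mem : γ ∈ Γ
  word : ∀ j : γ.Idx, List (Lett A)
  word_mem : ∀ j, word j ∈ γ.lang j

namespace Expansion

variable {A ι : Type} {Γ : UC2RPQ A ι}

/-- Variables of the expansion: variables of the disjunct, plus fresh intermediate
variables for each chosen word (a word of length `k` contributes `k - 1` of them). -/
abbrev EVar (e : Expansion Γ) : Type :=
  e.γ.Var ⊕ (Σ j : e.γ.Idx, Fin ((e.word j).length - 1))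

/-- The `p`-th vertex on the fresh oriented path expanding atom `j`. -/
def node (e : Expansion Γ) (j : e.γ.Idx) (p : ℕ) : e.EVar :=
  if hp : p = 0 then Sum.inl (e.γ.src j)
  else if h : p < (e.word j).length then Sum.inr ⟨j, ⟨p - 1, by omega⟩⟩
  else Sum.inl (e.γ.tgt j)

/-- The CQ associated with an expansion. -/
def cq (e : Expansion Γ) : CQ A ι where
  Var := e.EVar
  finVar := inferInstance
  free := fun i => Sum.inl (e.γ.free i)
  atoms := {t | ∃ (j : e.γ.Idx) (p : ℕ) (a : A),
    ((e.word j)[p]? = some (Sum.inl a) ∧ t = (e.node j p, a, e.node j (p + 1))) ∨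
    ((e.word j)[p]? = some (Sum.inr a) ∧ t = (e.node j (p + 1), a, e.node j p))}
  eqs := {t | ∃ j : e.γ.Idx, e.word j = [] ∧
    t = (Sum.inl (e.γ.src j), Sum.inl (e.γ.tgt j))}

/-- The size `‖λ‖` of an expansion: its number of non-equality atoms. -/
noncomputable def size (e : Expansion Γ) : ℕ := e.cq.atoms.ncard

/-- An expansion is minimal if no expansion of strictly smaller size maps into it. -/
def Minimal (e : Expansion Γ) : Prop :=
  ¬ ∃ e' : Expansion Γ, CQHom e'.cq e.cq ∧ e'.size < e.size

end Expansion


/-- The prefix-free sublanguage of `L`: words of `L` with no proper prefix in `L`. -/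
def Lpf {A : Type} (L : Language A) : Language A :=
  {w | w ∈ L ∧ ¬ ∃ v, v ∈ L ∧ v <+: w ∧ v ≠ w}

/-- The suffix-free sublanguage of `L`: words of `L` with no proper suffix in `L`. -/
def Lsf {A : Type} (L : Language A) : Language A :=
  {w | w ∈ L ∧ ¬ ∃ v, v ∈ L ∧ v <:+ w ∧ v ≠ w}

/-- The query `∃ y (x →^L y)`, whose only free variable is `x`. -/
def existsTgtQ (A : Type) (L : Language A) : C2RPQ A Unit where
  Var := Fin 2
  finVar := inferInstance
  free := fun _ => 0
  Idx := Unit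
  finIdx := inferInstance
  src := fun _ => 0
  tgt := fun _ => 1
  lang := fun _ => liftLang L

/-- The query `∃ x (x →^L y)`, whose only free variable is `y`. -/
def existsSrcQ (A : Type) (L : Language A) : C2RPQ A Unit where
  Var := Fin 2
  finVar := inferInstance
  free := fun _ => 1
  Idx := Unit
  finIdx := inferInstance
  src := fun _ => 0
  tgt := fun _ => 1
  lang := fun _ => liftLang L


/-! ### Auxiliary development for the proof -/

section Proof

variable {A V : Type}

/-- Forward paths: paths using only forward edges. -/
inductive FwdPath (E : V → A → V → Prop) : V → List A → V → Prop
  | nil (v : V) : FwdPath E v [] v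
  | cons {u v w : V} {a : A} {l : List A} :
      E u a v → FwdPath E v l w → FwdPath E u (a :: l) w

lemma FwdPath.opath {E : V → A → V → Prop} {u v : V} {l : List A}
    (h : FwdPath E u l v) : OPath E u (l.map Sum.inl) v := by
  induction h with
  | nil v => exact .nil v
  | cons e _ ih => exact .fwd e ih

lemma opath_fwd {E : V → A → V → Prop} {u v : V} {w : List (Lett A)}
    (h : OPath E u w v) : ∀ l : List A, w = l.map Sum.inl → FwdPath E u l v := by
  induction h with
  | nil v =>
    intro l hl
    cases l with
    | nil => exact .nil v
    | cons => simp at hl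
  | fwd e _ ih =>
    intro l hl
    cases l with
    | nil => simp at hl
    | cons b l' =>
      simp only [List.map_cons, List.cons.injEq, Sum.inl.injEq] at hl
      exact hl.1 ▸ FwdPath.cons e (ih l' hl.2)
  | bwd e _ ih =>
    intro l hl
    cases l with
    | nil => simp at hl
    | cons b l' => simp at hl

lemma fwdPath_iff_fun {E : V → A → V → Prop} {u v : V} {w : List A} :
    FwdPath E u w v ↔ ∃ f : ℕ → V, f 0 = u ∧ f w.length = v ∧
      ∀ i a, w[i]? = some a → E (f i) a (f (i + 1)) := by
  constructor
  · intro h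
    induction h with
    | nil x => exact ⟨fun _ => x, rfl, rfl, by simp⟩
    | @cons x y z a l e p ih =>
      obtain ⟨f, hf0, hfl, hfe⟩ := ih
      refine ⟨fun i => if i = 0 then x else f (i - 1), by simp, by simp [hfl], ?_⟩
      intro i b hb
      cases i with
      | zero =>
        simp only [List.getElem?_cons_zero, Option.some.injEq] at hb
        subst hb
        simpa [hf0] using e
      | succ j =>
        simp only [List.getElem?_cons_succ] at hb
        simpa using hfe j b hb
  · rintro ⟨f, hf0, hfl, hfe⟩
    subst hf0
    subst hfl
    induction w generalizing f with
    | nil => exact .nil _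
    | cons a l ih =>
      exact FwdPath.cons (hfe 0 a (by simp))
        (ih (fun i => f (i + 1)) (fun i b hb => hfe (i + 1) b (by simpa using hb)))

lemma FwdPath.of_append_left {E : V → A → V → Prop} {u v : V} {w1 w2 : List A}
    (h : FwdPath E u (w1 ++ w2) v) : ∃ v', FwdPath E u w1 v' := by
  induction w1 generalizing u with
  | nil => exact ⟨u, .nil u⟩
  | cons a l ih =>
    cases h with
    | cons e p =>
      obtain ⟨v', p'⟩ := ih p
      exact ⟨v', .cons e p'⟩

lemma FwdPath.of_append_right {E : V → A → V → Prop} {u v : V} {w1 w2 : List A}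
    (h : FwdPath E u (w1 ++ w2) v) : ∃ u', FwdPath E u' w2 v := by
  induction w1 generalizing u with
  | nil => exact ⟨u, h⟩
  | cons a l ih =>
    cases h with
    | cons e p => exact ih p

lemma exists_pf_prefix {L : Language A} :
    ∀ (n : ℕ) (w : List A), w.length ≤ n → w ∈ L → ∃ v ∈ Lpf L, v <+: w := by
  intro n
  induction n with
  | zero =>
    intro w hw hm
    refine ⟨w, ⟨hm, ?_⟩, List.prefix_refl w⟩
    rintro ⟨v, -, hpre, hne⟩
    have h1 := hpre.length_le
    exact hne (hpre.eq_of_length (by omega))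
  | succ n ih =>
    intro w hw hm
    by_cases h : ∃ v, v ∈ L ∧ v <+: w ∧ v ≠ w
    · obtain ⟨v, hv, hpre, hne⟩ := h
      have hlt : v.length < w.length :=
        lt_of_le_of_ne hpre.length_le fun he => hne (hpre.eq_of_length he)
      obtain ⟨u, hu, hupre⟩ := ih v (by omega) hv
      exact ⟨u, hu, hupre.trans hpre⟩
    · exact ⟨w, ⟨hm, h⟩, List.prefix_refl w⟩

lemma exists_sf_suffix {L : Language A} :
    ∀ (n : ℕ) (w : List A), w.length ≤ n → w ∈ L → ∃ v ∈ Lsf L, v <:+ w := by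
  intro n
  induction n with
  | zero =>
    intro w hw hm
    refine ⟨w, ⟨hm, ?_⟩, List.suffix_refl w⟩
    rintro ⟨v, -, hsuf, hne⟩
    have h1 := hsuf.length_le
    exact hne (hsuf.eq_of_length (by omega))
  | succ n ih =>
    intro w hw hm
    by_cases h : ∃ v, v ∈ L ∧ v <:+ w ∧ v ≠ w
    · obtain ⟨v, hv, hsuf, hne⟩ := h
      have hlt : v.length < w.length :=
        lt_of_le_of_ne hsuf.length_le fun he => hne (hsuf.eq_of_length he)
      obtain ⟨u, hu, husuf⟩ := ih v (by omega) hv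
      exact ⟨u, hu, husuf.trans hsuf⟩
    · exact ⟨w, ⟨hm, h⟩, List.suffix_refl w⟩

/-- The `p`-th node of the path of a word `w`. -/
def pnode (w : List A) (p : ℕ) : Fin (w.length + 1) := ⟨min p w.length, by omega⟩

/-- The CQ asserting a path labelled `w` from/to the free variable `fv`. -/
def pathCQ (w : List A) (fv : Fin (w.length + 1)) : CQ A Unit where
  Var := Fin (w.length + 1)
  finVar := inferInstance
  free := fun _ => fv
  atoms := {t | ∃ (i : ℕ) (a : A), w[i]? = some a ∧ t = (pnode w i, a, pnode w (i + 1))}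
  eqs := ∅

lemma pathCQ_eval_iff {w : List A} {fv : Fin (w.length + 1)} {E : V → A → V → Prop}
    {t : Unit → V} :
    (pathCQ w fv).eval E t ↔ ∃ f : ℕ → V, f fv.val = t () ∧
      ∀ i a, w[i]? = some a → E (f i) a (f (i + 1)) := by
  simp only [CQ.eval]
  constructor
  · rintro ⟨h, hfree, hat, -⟩
    refine ⟨fun p => h (pnode w p), ?_, fun i a ha => hat _ _ _ ⟨i, a, ha, rfl⟩⟩
    show h (pnode w fv.val) = t ()
    have hfv : pnode w fv.val = fv := by
      apply Fin.ext
      show min fv.val w.length = fv.val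
      have := fv.isLt
      omega
    rw [hfv]
    exact hfree ()
  · rintro ⟨f, hf, hfe⟩
    refine ⟨fun i => f i.val, fun i => hf, ?_, ?_⟩
    · rintro x a y ⟨i, b, hib, heq⟩
      have hi : i < w.length := (List.getElem?_eq_some_iff.mp hib).1
      have h1 : (pnode w i).val = i := by simp only [pnode]; omega
      have h2 : (pnode w (i + 1)).val = i + 1 := by simp only [pnode]; omega
      have heq : x = pnode w i ∧ a = b ∧ y = pnode w (i + 1) := ⟨congrArg Prod.fst heq, congrArg (fun q => q.2.1) heq,
        congrArg (fun q => q.2.2) heq⟩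
      obtain ⟨rfl, rfl, rfl⟩ := heq
      simpa [h1, h2] using hfe i _ hib
    · rintro x y hxy
      exact absurd hxy (Set.notMem_empty _)

lemma pathCQ_eval_zero {w : List A} {E : V → A → V → Prop} {t : Unit → V} :
    (pathCQ w ⟨0, Nat.succ_pos _⟩).eval E t ↔ ∃ v, FwdPath E (t ()) w v := by
  rw [pathCQ_eval_iff]
  constructor
  · rintro ⟨f, hf, hfe⟩
    exact ⟨f w.length, by rw [fwdPath_iff_fun]; exact ⟨f, hf, rfl, hfe⟩⟩
  · rintro ⟨v, hp⟩
    rw [fwdPath_iff_fun] at hp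
    obtain ⟨f, hf0, hfl, hfe⟩ := hp
    exact ⟨f, hf0, hfe⟩

lemma pathCQ_eval_last {w : List A} {E : V → A → V → Prop} {t : Unit → V} :
    (pathCQ w (Fin.last w.length)).eval E t ↔ ∃ u, FwdPath E u w (t ()) := by
  rw [pathCQ_eval_iff]
  constructor
  · rintro ⟨f, hf, hfe⟩
    refine ⟨f 0, ?_⟩
    rw [fwdPath_iff_fun]
    exact ⟨f, rfl, by simpa using hf, hfe⟩
  · rintro ⟨u, hp⟩
    rw [fwdPath_iff_fun] at hp
    obtain ⟨f, hf0, hfl, hfe⟩ := hp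
    exact ⟨f, by simpa using hfl, hfe⟩

lemma evalTgt_iff {L : Language A} {E : V → A → V → Prop} {t : Unit → V} :
    UC2RPQ.eval [existsTgtQ A L] E t ↔ ∃ u ∈ L, ∃ v, FwdPath E (t ()) u v := by
  simp only [UC2RPQ.eval, C2RPQ.eval, List.mem_singleton]
  constructor
  · rintro ⟨γ, rfl, h, hfree, hsat⟩
    obtain ⟨wrd, hwmem, hpath⟩ := hsat ()
    have hwmem' : wrd ∈ (fun l : List A => l.map Sum.inl) '' L := hwmem
    obtain ⟨u, huL, rfl⟩ := hwmem'
    refine ⟨u, huL, h ((1 : Fin 2)), ?_⟩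
    have hfw : FwdPath E (h ((existsTgtQ A L).src ())) u (h ((existsTgtQ A L).tgt ())) :=
      opath_fwd hpath u rfl
    have h0 : h ((existsTgtQ A L).src ()) = t () := hfree ()
    rw [h0] at hfw
    exact hfw
  · rintro ⟨u, huL, v, hp⟩
    classical
    refine ⟨existsTgtQ A L, rfl, fun i : Fin 2 => if i = 0 then t () else v,
      fun i => ?_, fun j => ⟨u.map Sum.inl, ⟨u, huL, rfl⟩, ?_⟩⟩
    · show (if (0 : Fin 2) = 0 then t () else v) = t ()
      rw [if_pos rfl]
    · show OPath E (if (0 : Fin 2) = 0 then t () else v) (u.map Sum.inl)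
        (if (1 : Fin 2) = 0 then t () else v)
      rw [if_pos rfl, if_neg (by decide : ¬ (1 : Fin 2) = 0)]
      exact hp.opath

lemma evalSrc_iff {L : Language A} {E : V → A → V → Prop} {t : Unit → V} :
    UC2RPQ.eval [existsSrcQ A L] E t ↔ ∃ u ∈ L, ∃ s, FwdPath E s u (t ()) := by
  simp only [UC2RPQ.eval, C2RPQ.eval, List.mem_singleton]
  constructor
  · rintro ⟨γ, rfl, h, hfree, hsat⟩
    obtain ⟨wrd, hwmem, hpath⟩ := hsat ()
    have hwmem' : wrd ∈ (fun l : List A => l.map Sum.inl) '' L := hwmem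
    obtain ⟨u, huL, rfl⟩ := hwmem'
    refine ⟨u, huL, h ((0 : Fin 2)), ?_⟩
    have hfw : FwdPath E (h ((existsSrcQ A L).src ())) u (h ((existsSrcQ A L).tgt ())) :=
      opath_fwd hpath u rfl
    have h1 : h ((existsSrcQ A L).tgt ()) = t () := hfree ()
    rw [h1] at hfw
    exact hfw
  · rintro ⟨u, huL, s, hp⟩
    classical
    refine ⟨existsSrcQ A L, rfl, fun i : Fin 2 => if i = 0 then s else t (),
      fun i => ?_, fun j => ⟨u.map Sum.inl, ⟨u, huL, rfl⟩, ?_⟩⟩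
    · show (if (1 : Fin 2) = 0 then s else t ()) = t ()
      rw [if_neg (by decide : ¬ (1 : Fin 2) = 0)]
    · show OPath E (if (0 : Fin 2) = 0 then s else t ()) (u.map Sum.inl)
        (if (1 : Fin 2) = 0 then s else t ())
      rw [if_pos rfl, if_neg (by decide : ¬ (1 : Fin 2) = 0)]
      exact hp.opath

/-- The path graph database of a word `w`. -/
def pE (w : List A) : Fin (w.length + 1) → A → Fin (w.length + 1) → Prop :=
  fun i a j => ∃ k : ℕ, w[k]? = some a ∧ i.val = k ∧ j.val = k + 1

/-- The path graph database of a word `w` with the `m`-th edge removed. -/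
def pE' (w : List A) (m : ℕ) : Fin (w.length + 1) → A → Fin (w.length + 1) → Prop :=
  fun i a j => ∃ k : ℕ, k ≠ m ∧ w[k]? = some a ∧ i.val = k ∧ j.val = k + 1

lemma pE_full (w : List A) : FwdPath (pE w) (pnode w 0) w (pnode w w.length) := by
  rw [fwdPath_iff_fun]
  refine ⟨fun p => pnode w p, rfl, rfl, fun i a ha => ?_⟩
  have hi : i < w.length := (List.getElem?_eq_some_iff.mp ha).1
  refine ⟨i, ha, ?_, ?_⟩
  · show min i w.length = i
    omega
  · show min (i + 1) w.length = i + 1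
    omega

lemma pE'_spec {w : List A} {m : ℕ} {u v : Fin (w.length + 1)} {l : List A}
    (h : FwdPath (pE' w m) u l v) :
    v.val = u.val + l.length ∧ l = (w.drop u.val).take l.length ∧
      (u.val ≤ m → v.val ≤ m) ∧ (m < v.val → m < u.val) := by
  induction h with
  | nil x => exact ⟨rfl, by simp, fun h => h, fun h => h⟩
  | @cons x y z a l e p ih =>
    obtain ⟨k, hkm, hka, hx, hy⟩ := e
    obtain ⟨hlen, hlab, hle, hgt⟩ := ih
    have hk : k < w.length := (List.getElem?_eq_some_iff.mp hka).1
    have hwa : w[k] = a := (List.getElem?_eq_some_iff.mp hka).2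
    have hdrop : w.drop x.val = a :: w.drop (x.val + 1) := by
      rw [hx, ← hwa]
      exact (List.getElem_cons_drop hk).symm
    have hy' : y.val = x.val + 1 := by omega
    refine ⟨by simp only [List.length_cons]; omega, ?_, fun hum => ?_, fun hmz => ?_⟩
    · rw [hy'] at hlab
      rw [hdrop, List.length_cons, List.take_succ_cons, ← hlab]
    · exact hle (by omega)
    · have := hgt hmz
      omega

lemma exists_avoid {n : ℕ} {W : Type} [Finite W] (hc : Nat.card W < n)
    (h : W → Fin (n + 1)) : ∃ m, m < n ∧ ∀ x, (h x).val ≠ m := by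
  by_contra hcon
  push_neg at hcon
  choose g hg using fun m : Fin n => hcon m.val m.isLt
  have hinj : Function.Injective g := by
    intro m1 m2 he
    have h1 := hg m1
    have h2 := hg m2
    rw [he] at h1
    exact Fin.ext (by omega)
  have := Nat.card_le_card_of_injective g hinj
  simp only [Nat.card_eq_fintype_card, Fintype.card_fin] at this
  omega

lemma le_sum_map {α : Type*} (f : α → ℕ) (l : List α) {x : α} (hx : x ∈ l) :
    f x ≤ (l.map f).sum := by
  induction l with
  | nil => cases hx
  | cons a l ih =>
    rcases List.mem_cons.mp hx with rfl | h
    · simp only [List.map_cons, List.sum_cons]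
      exact Nat.le_add_right _ _
    · simp only [List.map_cons, List.sum_cons]
      exact le_trans (ih h) (Nat.le_add_left _ _)

lemma exists_long [Fintype A] {S : Set (List A)} (h : ¬ S.Finite) (N : ℕ) :
    ∃ w ∈ S, N < w.length := by
  by_contra hcon
  push_neg at hcon
  exact h ((List.finite_length_le A N).subset hcon)

end Proof

/-- The CRPQ `∃y (x →^L y)` is bounded iff `L_pf` is finite, and the
CRPQ `∃x (x →^L y)` is bounded iff `L_sf` is finite. -/
theorem exists_rpq_bounded_iff {A : Type} [Fintype A] (L : Language A)
    (hreg : L.IsRegular) :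
    (UC2RPQ.Bounded [existsTgtQ A L] ↔ (Lpf L).Finite) ∧
    (UC2RPQ.Bounded [existsSrcQ A L] ↔ (Lsf L).Finite) := by
  classical
  constructor
  · constructor
    · -- bounded → Lpf finite
      rintro ⟨Φ, hΦ⟩
      by_contra hinf
      obtain ⟨w, hwpf, hwlen⟩ := exists_long hinf ((Φ.map fun φ => Nat.card φ.Var).sum)
      have h1 : UC2RPQ.eval [existsTgtQ A L] (pE w) (fun _ => pnode w 0) :=
        evalTgt_iff.mpr ⟨w, hwpf.1, pnode w w.length, pE_full w⟩
      have h2 := (hΦ _ (pE w) _).mp h1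
      simp only [UCQ.eval, CQ.eval] at h2
      obtain ⟨φ, hφmem, h, hfree, hat, heq⟩ := h2
      have hcard : Nat.card φ.Var < w.length :=
        lt_of_le_of_lt (le_sum_map (fun φ => Nat.card φ.Var) Φ hφmem) hwlen
      obtain ⟨m, hm, hmav⟩ := exists_avoid hcard h
      have h3 : UCQ.eval Φ (pE' w m) (fun _ => pnode w 0) := by
        refine ⟨φ, hφmem, h, hfree, ?_, heq⟩
        intro x a y hxy
        obtain ⟨k, hka, hx, hy⟩ := hat x a y hxy
        exact ⟨k, hx ▸ hmav x, hka, hx, hy⟩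
      have h4 := (hΦ _ (pE' w m) _).mpr h3
      rw [evalTgt_iff] at h4
      obtain ⟨u, huL, v, hp⟩ := h4
      obtain ⟨hlen, hlab, hle, -⟩ := pE'_spec hp
      have h0 : (pnode w 0).val = 0 := by simp only [pnode]; omega
      rw [h0] at hlen hlab hle
      simp only [List.drop_zero] at hlab
      have hvm : v.val ≤ m := hle (Nat.zero_le m)
      refine hwpf.2 ⟨u, huL, ?_, ?_⟩
      · rw [hlab]
        exact List.take_prefix _ _
      · intro he
        have hul := congrArg List.length he
        omega
    · -- Lpf finite → bounded
      intro hfin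
      refine ⟨hfin.toFinset.toList.map (fun w => pathCQ w ⟨0, Nat.succ_pos _⟩), ?_⟩
      intro V _ E t
      rw [evalTgt_iff]
      simp only [UCQ.eval]
      constructor
      · rintro ⟨u, huL, v, hp⟩
        obtain ⟨u', hu'pf, hpre⟩ := exists_pf_prefix u.length u le_rfl huL
        obtain ⟨w2, rfl⟩ := hpre
        obtain ⟨v', hp'⟩ := hp.of_append_left
        refine ⟨pathCQ u' ⟨0, Nat.succ_pos _⟩, List.mem_map.mpr ⟨u', ?_, rfl⟩,
          pathCQ_eval_zero.mpr ⟨v', hp'⟩⟩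
        rw [Finset.mem_toList]; refine hfin.mem_toFinset.mpr ?_
        exact hu'pf
      · rintro ⟨φ, hφ, heval⟩
        obtain ⟨u', hu', rfl⟩ := List.mem_map.mp hφ
        rw [Finset.mem_toList] at hu'; replace hu' := hfin.mem_toFinset.mp hu'
        obtain ⟨v, hp⟩ := pathCQ_eval_zero.mp heval
        exact ⟨u', hu'.1, v, hp⟩
  · constructor
    · -- bounded → Lsf finite
      rintro ⟨Φ, hΦ⟩
      by_contra hinf
      obtain ⟨w, hwsf, hwlen⟩ := exists_long hinf ((Φ.map fun φ => Nat.card φ.Var).sum)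
      have h1 : UC2RPQ.eval [existsSrcQ A L] (pE w) (fun _ => pnode w w.length) :=
        evalSrc_iff.mpr ⟨w, hwsf.1, pnode w 0, pE_full w⟩
      have h2 := (hΦ _ (pE w) _).mp h1
      simp only [UCQ.eval, CQ.eval] at h2
      obtain ⟨φ, hφmem, h, hfree, hat, heq⟩ := h2
      have hcard : Nat.card φ.Var < w.length :=
        lt_of_le_of_lt (le_sum_map (fun φ => Nat.card φ.Var) Φ hφmem) hwlen
      obtain ⟨m, hm, hmav⟩ := exists_avoid hcard h
      have h3 : UCQ.eval Φ (pE' w m) (fun _ => pnode w w.length) := by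
        refine ⟨φ, hφmem, h, hfree, ?_, heq⟩
        intro x a y hxy
        obtain ⟨k, hka, hx, hy⟩ := hat x a y hxy
        exact ⟨k, hx ▸ hmav x, hka, hx, hy⟩
      have h4 := (hΦ _ (pE' w m) _).mpr h3
      rw [evalSrc_iff] at h4
      obtain ⟨u, huL, s, hp⟩ := h4
      obtain ⟨hlen, hlab, -, hgt⟩ := pE'_spec hp
      have h0 : (pnode w w.length).val = w.length := by simp only [pnode]; omega
      rw [h0] at hlen hgt
      have hms : m < s.val := hgt (by omega)
      have hud : u = w.drop s.val := by
        rw [hlab]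
        exact List.take_of_length_le (by simp only [List.length_drop]; omega)
      refine hwsf.2 ⟨u, huL, ?_, ?_⟩
      · rw [hud]
        exact List.drop_suffix _ _
      · intro he
        have hul := congrArg List.length he
        omega
    · -- Lsf finite → bounded
      intro hfin
      refine ⟨hfin.toFinset.toList.map (fun w => pathCQ w (Fin.last w.length)), ?_⟩
      intro V _ E t
      rw [evalSrc_iff]
      simp only [UCQ.eval]
      constructor
      · rintro ⟨u, huL, s, hp⟩
        obtain ⟨u', hu'sf, hsuf⟩ := exists_sf_suffix u.length u le_rfl huL
        obtain ⟨w1, rfl⟩ := hsuf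
        obtain ⟨s', hp'⟩ := hp.of_append_right
        refine ⟨pathCQ u' (Fin.last u'.length), List.mem_map.mpr ⟨u', ?_, rfl⟩,
          pathCQ_eval_last.mpr ⟨s', hp'⟩⟩
        rw [Finset.mem_toList]; refine hfin.mem_toFinset.mpr ?_
        exact hu'sf
      · rintro ⟨φ, hφ, heval⟩
        obtain ⟨u', hu', rfl⟩ := List.mem_map.mp hφ
        rw [Finset.mem_toList] at hu'; replace hu' := hfin.mem_toFinset.mp hu'
        obtain ⟨s, hp⟩ := pathCQ_eval_last.mp heval
        exact ⟨u', hu'.1, s, hp⟩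

end RPQ
end

section
/- There is a polynomial p such that for every language L ⊆ A* accepted by an NFA with n states, each of the languages L_pf, L_sf and L_ff is regular and is accepted by an NFA with at most 2^{p(n)} states. -/
namespace RPQ

/-- The factor-free sublanguage of `L`: words of `L` with no proper factor in `L`. -/
def Lff {A : Type} (L : Language A) : Language A :=
  {w | w ∈ L ∧ ¬ ∃ v, v ∈ L ∧ v <:+: w ∧ v ≠ w}

open NFA

variable {α : Type*} {σ τ : Type*}

/-- NFA for `L ⬝ A⁺` (proper-prefix language): simulate `M`, and from any accepting
state, on any letter, jump to an absorbing accepting sink. -/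
def ppNFA (M : NFA α σ) : NFA α (σ ⊕ Unit) where
  step q a := match q with
    | Sum.inl s => Sum.inl '' (M.step s a) ∪ {q | q = Sum.inr () ∧ s ∈ M.accept}
    | Sum.inr _ => {Sum.inr ()}
  start := Sum.inl '' M.start
  accept := {Sum.inr ()}

lemma Q_append (L : Language α) (w : List α) (a : α) :
    (∃ u y, u ∈ L ∧ y ≠ [] ∧ w ++ [a] = u ++ y) ↔
      (w ∈ L ∨ ∃ u y, u ∈ L ∧ y ≠ [] ∧ w = u ++ y) := by
  constructor
  · rintro ⟨u, y, hu, hy, he⟩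
    rcases y.eq_nil_or_concat with rfl | ⟨y', b, rfl⟩
    · exact absurd rfl hy
    · simp only [List.concat_eq_append, ← List.append_assoc] at he
      obtain ⟨rfl, h2⟩ := List.append_inj' he rfl
      rcases y'.eq_nil_or_concat with rfl | ⟨y'', c, rfl⟩
      · simp only [List.append_nil] at *
        exact Or.inl hu
      · exact Or.inr ⟨u, _, hu, by simp, rfl⟩
  · rintro (h | ⟨u, y, hu, hy, rfl⟩)
    · exact ⟨w, [a], h, by simp, rfl⟩
    · exact ⟨u, y ++ [a], hu, by simp [hy], by simp⟩

lemma ppNFA_mem_eval (M : NFA α σ) (w : List α) :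
    (∀ s, Sum.inl s ∈ (ppNFA M).eval w ↔ s ∈ M.eval w) ∧
    (Sum.inr () ∈ (ppNFA M).eval w ↔ ∃ u y, u ∈ M.accepts ∧ y ≠ [] ∧ w = u ++ y) := by
  induction w using List.reverseRecOn with
  | nil =>
    constructor
    · intro s
      simp [ppNFA, NFA.eval_nil]
    · simp [ppNFA, NFA.eval_nil]
  | append_singleton w a ih =>
    obtain ⟨ihl, ihr⟩ := ih
    rw [NFA.eval_append_singleton]
    constructor
    · intro s
      rw [NFA.mem_stepSet]
      constructor
      · rintro ⟨t, ht, hs⟩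
        rcases t with t | t
        · simp only [ppNFA, Set.mem_union, Set.mem_image, Set.mem_setOf_eq] at hs
          rcases hs with ⟨s', hs', h⟩ | ⟨h, _⟩
          · cases h
            rw [NFA.eval_append_singleton, NFA.mem_stepSet]
            exact ⟨t, (ihl t).mp ht, hs'⟩
          · exact absurd h (by simp)
        · simp only [ppNFA, Set.mem_singleton_iff] at hs
          exact absurd hs (by simp)
      · intro hs
        rw [NFA.eval_append_singleton, NFA.mem_stepSet] at hs
        obtain ⟨t, ht, hs⟩ := hs
        refine ⟨Sum.inl t, (ihl t).mpr ht, ?_⟩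
        simp only [ppNFA, Set.mem_union, Set.mem_image, Set.mem_setOf_eq]
        exact Or.inl ⟨s, hs, rfl⟩
    · rw [NFA.mem_stepSet, Q_append]
      constructor
      · rintro ⟨t, ht, hs⟩
        rcases t with t | t
        · simp only [ppNFA, Set.mem_union, Set.mem_image, Set.mem_setOf_eq] at hs
          rcases hs with ⟨s', _, h⟩ | ⟨_, hacc⟩
          · exact absurd h (by simp)
          · exact Or.inl ⟨t, hacc, (ihl t).mp ht⟩
        · exact Or.inr (ihr.mp (by cases t; exact ht))
      · rintro (hw | hQ)
        · obtain ⟨t, hacc, ht⟩ := hw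
          exact ⟨Sum.inl t, (ihl t).mpr ht, by simp [ppNFA, hacc]⟩
        · exact ⟨Sum.inr (), ihr.mpr hQ, by simp [ppNFA]⟩

lemma ppNFA_accepts (M : NFA α σ) :
    (ppNFA M).accepts = {w | ∃ u y, u ∈ M.accepts ∧ y ≠ [] ∧ w = u ++ y} := by
  ext w
  rw [NFA.mem_accepts]
  constructor
  · rintro ⟨q, hq, hw⟩
    have : q = Sum.inr () := hq
    subst this
    exact (ppNFA_mem_eval M w).2.mp hw
  · intro h
    exact ⟨Sum.inr (), rfl, (ppNFA_mem_eval M w).2.mpr h⟩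

/-- `ppNFA` with accepting states also including images of `M`'s accepting states:
accepts `L ⬝ A*`. -/
def ppStarNFA (M : NFA α σ) : NFA α (σ ⊕ Unit) :=
  { ppNFA M with accept := Sum.inl '' M.accept ∪ {Sum.inr ()} }

lemma ppStarNFA_eval (M : NFA α σ) : (ppStarNFA M).eval = (ppNFA M).eval := rfl

lemma ppStarNFA_accepts (M : NFA α σ) :
    (ppStarNFA M).accepts = {w | ∃ u y, u ∈ M.accepts ∧ w = u ++ y} := by
  ext w
  rw [NFA.mem_accepts]
  constructor
  · rintro ⟨q, hq, hw⟩
    rcases hq with ⟨s, hs, rfl⟩ | hq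
    · exact ⟨w, [], ⟨s, hs, ((ppNFA_mem_eval M w).1 s).mp hw⟩, by simp⟩
    · have : q = Sum.inr () := hq
      subst this
      obtain ⟨u, y, hu, _, rfl⟩ := (ppNFA_mem_eval M w).2.mp hw
      exact ⟨u, y, hu, rfl⟩
  · rintro ⟨u, y, hu, rfl⟩
    rcases y.eq_nil_or_concat' with rfl | ⟨y', b, rfl⟩
    · obtain ⟨s, hs, hu⟩ := hu
      exact ⟨Sum.inl s, Or.inl ⟨s, hs, rfl⟩, by
        rw [List.append_nil]; exact ((ppNFA_mem_eval M u).1 s).mpr hu⟩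
    · exact ⟨Sum.inr (), Or.inr rfl,
        (ppNFA_mem_eval M _).2.mpr ⟨u, y' ++ [b], hu, by simp, rfl⟩⟩

/-- NFA for `A⁺ ⬝ N.accepts`: wait in a pre-state, and on some letter jump into the
start states of `N`. -/
def psNFA (N : NFA α σ) : NFA α (Unit ⊕ σ) where
  step q a := match q with
    | Sum.inl _ => {Sum.inl ()} ∪ Sum.inr '' N.start
    | Sum.inr s => Sum.inr '' (N.step s a)
  start := {Sum.inl ()}
  accept := Sum.inr '' N.accept

lemma psNFA_mem_eval (N : NFA α σ) (w : List α) :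
    (Sum.inl () ∈ (psNFA N).eval w) ∧
    (∀ s, Sum.inr s ∈ (psNFA N).eval w ↔
      ∃ x y, x ≠ ([] : List α) ∧ w = x ++ y ∧ s ∈ N.evalFrom N.start y) := by
  induction w using List.reverseRecOn with
  | nil =>
    refine ⟨rfl, fun s => ?_⟩
    simp only [NFA.eval_nil, psNFA, Set.mem_singleton_iff]
    constructor
    · intro h; exact absurd h (by simp)
    · rintro ⟨x, y, hx, he, _⟩
      exact absurd (List.append_eq_nil_iff.mp he.symm).1 hx
  | append_singleton w a ih =>
    obtain ⟨ihl, ihr⟩ := ih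
    rw [NFA.eval_append_singleton]
    constructor
    · rw [NFA.mem_stepSet]
      exact ⟨Sum.inl (), ihl, Or.inl rfl⟩
    · intro s
      rw [NFA.mem_stepSet]
      constructor
      · rintro ⟨t, ht, hs⟩
        rcases t with t | t
        · rcases hs with hs | ⟨s', hs', h⟩
          · exact absurd hs (by simp)
          · cases h
            exact ⟨w ++ [a], [], by simp, by simp, hs'⟩
        · obtain ⟨s', hs', h⟩ := hs
          cases h
          obtain ⟨x, y, hx, rfl, hev⟩ := (ihr t).mp ht
          refine ⟨x, y ++ [a], hx, by simp, ?_⟩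
          rw [NFA.evalFrom_append, NFA.evalFrom_singleton, NFA.mem_stepSet]
          exact ⟨t, hev, hs'⟩
      · rintro ⟨x, y, hx, he, hev⟩
        rcases y.eq_nil_or_concat' with rfl | ⟨y', b, rfl⟩
        · rw [List.append_nil] at he
          refine ⟨Sum.inl (), ihl, Or.inr ⟨s, ?_, rfl⟩⟩
          simpa using hev
        · rw [← List.append_assoc] at he
          obtain ⟨rfl, h2⟩ := List.append_inj' he rfl
          obtain rfl : a = b := by injection h2
          rw [NFA.evalFrom_append, NFA.evalFrom_singleton, NFA.mem_stepSet] at hev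
          obtain ⟨t, ht, hs⟩ := hev
          exact ⟨Sum.inr t, (ihr t).mpr ⟨x, y', hx, rfl, ht⟩, ⟨s, hs, rfl⟩⟩

lemma psNFA_accepts (N : NFA α σ) :
    (psNFA N).accepts = {w | ∃ x y, x ≠ ([] : List α) ∧ w = x ++ y ∧ y ∈ N.accepts} := by
  ext w
  rw [NFA.mem_accepts]
  constructor
  · rintro ⟨q, hq, hw⟩
    obtain ⟨s, hs, rfl⟩ := hq
    obtain ⟨x, y, hx, rfl, hev⟩ := ((psNFA_mem_eval N _).2 s).mp hw
    exact ⟨x, y, hx, rfl, s, hs, hev⟩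
  · rintro ⟨x, y, hx, rfl, s, hs, hev⟩
    exact ⟨Sum.inr s, ⟨s, hs, rfl⟩, ((psNFA_mem_eval N _).2 s).mpr ⟨x, y, hx, rfl, hev⟩⟩

/-- Disjoint-union NFA, accepting the union of the two languages. -/
def sumNFA (M : NFA α σ) (N : NFA α τ) : NFA α (σ ⊕ τ) where
  step q a := match q with
    | Sum.inl s => Sum.inl '' (M.step s a)
    | Sum.inr t => Sum.inr '' (N.step t a)
  start := Sum.inl '' M.start ∪ Sum.inr '' N.start
  accept := Sum.inl '' M.accept ∪ Sum.inr '' N.accept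

lemma sumNFA_mem_eval (M : NFA α σ) (N : NFA α τ) (w : List α) :
    (∀ s, Sum.inl s ∈ (sumNFA M N).eval w ↔ s ∈ M.eval w) ∧
    (∀ t, Sum.inr t ∈ (sumNFA M N).eval w ↔ t ∈ N.eval w) := by
  induction w using List.reverseRecOn with
  | nil =>
    constructor <;> intro s <;> simp [sumNFA, NFA.eval_nil]
  | append_singleton w a ih =>
    obtain ⟨ihl, ihr⟩ := ih
    simp only [NFA.eval_append_singleton, NFA.mem_stepSet]
    constructor
    · intro s
      constructor
      · rintro ⟨t, ht, hs⟩
        rcases t with t | t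
        · obtain ⟨s', hs', h⟩ := hs
          cases h
          exact ⟨t, (ihl t).mp ht, hs'⟩
        · obtain ⟨s', _, h⟩ := hs
          exact absurd h (by simp)
      · rintro ⟨t, ht, hs⟩
        exact ⟨Sum.inl t, (ihl t).mpr ht, ⟨s, hs, rfl⟩⟩
    · intro s
      constructor
      · rintro ⟨t, ht, hs⟩
        rcases t with t | t
        · obtain ⟨s', _, h⟩ := hs
          exact absurd h (by simp)
        · obtain ⟨s', hs', h⟩ := hs
          cases h
          exact ⟨t, (ihr t).mp ht, hs'⟩
      · rintro ⟨t, ht, hs⟩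
        exact ⟨Sum.inr t, (ihr t).mpr ht, ⟨s, hs, rfl⟩⟩

lemma sumNFA_accepts (M : NFA α σ) (N : NFA α τ) (w : List α) :
    w ∈ (sumNFA M N).accepts ↔ w ∈ M.accepts ∨ w ∈ N.accepts := by
  rw [NFA.mem_accepts]
  constructor
  · rintro ⟨q, hq, hw⟩
    rcases hq with ⟨s, hs, rfl⟩ | ⟨t, ht, rfl⟩
    · exact Or.inl ⟨s, hs, ((sumNFA_mem_eval M N w).1 s).mp hw⟩
    · exact Or.inr ⟨t, ht, ((sumNFA_mem_eval M N w).2 t).mp hw⟩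
  · rintro (⟨s, hs, hw⟩ | ⟨t, ht, hw⟩)
    · exact ⟨Sum.inl s, Or.inl ⟨s, hs, rfl⟩, ((sumNFA_mem_eval M N w).1 s).mpr hw⟩
    · exact ⟨Sum.inr t, Or.inr ⟨t, ht, rfl⟩, ((sumNFA_mem_eval M N w).2 t).mpr hw⟩

/-- Product DFA accepting the set difference of the two languages. -/
def diffDFA (D : DFA α σ) (E : DFA α τ) : DFA α (σ × τ) where
  step p a := (D.step p.1 a, E.step p.2 a)
  start := (D.start, E.start)
  accept := {p | p.1 ∈ D.accept ∧ p.2 ∉ E.accept}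

lemma diffDFA_evalFrom (D : DFA α σ) (E : DFA α τ) (s : σ) (t : τ) (w : List α) :
    (diffDFA D E).evalFrom (s, t) w = (D.evalFrom s w, E.evalFrom t w) := by
  induction w generalizing s t with
  | nil => rfl
  | cons a w ih => exact ih _ _

lemma diffDFA_accepts (D : DFA α σ) (E : DFA α τ) (w : List α) :
    w ∈ (diffDFA D E).accepts ↔ w ∈ D.accepts ∧ w ∉ E.accepts := by
  rw [DFA.mem_accepts]
  show (diffDFA D E).evalFrom (D.start, E.start) w ∈ _ ↔ _
  rw [diffDFA_evalFrom]
  rfl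

lemma lpf_iff (L : Language α) (w : List α) :
    (∃ v, v ∈ L ∧ v <+: w ∧ v ≠ w) ↔ ∃ u y, u ∈ L ∧ y ≠ ([] : List α) ∧ w = u ++ y := by
  constructor
  · rintro ⟨v, hv, ⟨y, rfl⟩, hne⟩
    refine ⟨v, y, hv, ?_, rfl⟩
    rintro rfl
    exact hne (by simp)
  · rintro ⟨u, y, hu, hy, rfl⟩
    refine ⟨u, hu, ⟨y, rfl⟩, ?_⟩
    intro h
    exact hy (by simpa using h)

lemma lsf_iff (L : Language α) (w : List α) :
    (∃ v, v ∈ L ∧ v <:+ w ∧ v ≠ w) ↔ ∃ x y, x ≠ ([] : List α) ∧ w = x ++ y ∧ y ∈ L := by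
  constructor
  · rintro ⟨v, hv, ⟨x, rfl⟩, hne⟩
    refine ⟨x, v, ?_, rfl, hv⟩
    rintro rfl
    exact hne (by simp)
  · rintro ⟨x, y, hx, rfl, hy⟩
    refine ⟨y, hy, ⟨x, rfl⟩, ?_⟩
    intro h
    have := congrArg List.length h
    simp only [List.length_append] at this
    exact hx (List.length_eq_zero_iff.mp (by omega))

lemma lff_iff (L : Language α) (w : List α) :
    (∃ v, v ∈ L ∧ v <:+: w ∧ v ≠ w) ↔
      ((∃ x z, x ≠ ([] : List α) ∧ w = x ++ z ∧ ∃ u y, u ∈ L ∧ z = u ++ y) ∨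
        (∃ u y, u ∈ L ∧ y ≠ ([] : List α) ∧ w = u ++ y)) := by
  constructor
  · rintro ⟨v, hv, ⟨x, y, rfl⟩, hne⟩
    rcases eq_or_ne x [] with rfl | hx
    · refine Or.inr ⟨v, y, hv, ?_, by simp⟩
      rintro rfl
      exact hne (by simp)
    · exact Or.inl ⟨x, v ++ y, hx, by simp, v, y, hv, rfl⟩
  · rintro (⟨x, z, hx, rfl, u, y, hu, rfl⟩ | ⟨u, y, hu, hy, rfl⟩)
    · refine ⟨u, hu, ⟨x, y, by simp⟩, ?_⟩
      intro h
      have := congrArg List.length h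
      simp only [List.length_append] at this
      exact hx (List.length_eq_zero_iff.mp (by omega))
    · refine ⟨u, hu, ⟨[], y, by simp⟩, ?_⟩
      intro h
      have := congrArg List.length h
      simp only [List.length_append] at this
      exact hy (List.length_eq_zero_iff.mp (by omega))

/-- There is a polynomial `p` such that whenever `L` is accepted by an
NFA with `n` states, each of `L_pf`, `L_sf`, `L_ff` is regular, being accepted by an NFA
with at most `2 ^ p(n)` states. -/
theorem pf_sf_ff_regular_exponential_nfa :
    ∃ p : Polynomial ℕ,
      ∀ (A σ : Type) [Fintype A] [Fintype σ] (M : NFA A σ),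
        ((Lpf M.accepts).IsRegular ∧
          ∃ (σ' : Type) (_ : Fintype σ') (M' : NFA A σ'),
            M'.accepts = Lpf M.accepts ∧
            Fintype.card σ' ≤ 2 ^ p.eval (Fintype.card σ)) ∧
        ((Lsf M.accepts).IsRegular ∧
          ∃ (σ' : Type) (_ : Fintype σ') (M' : NFA A σ'),
            M'.accepts = Lsf M.accepts ∧
            Fintype.card σ' ≤ 2 ^ p.eval (Fintype.card σ)) ∧
        ((Lff M.accepts).IsRegular ∧
          ∃ (σ' : Type) (_ : Fintype σ') (M' : NFA A σ'),
            M'.accepts = Lff M.accepts ∧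
            Fintype.card σ' ≤ 2 ^ p.eval (Fintype.card σ)) := by
  refine ⟨3 * Polynomial.X + Polynomial.C 3, ?_⟩
  intro A σ _ _ M
  have hp : (3 * Polynomial.X + Polynomial.C 3 : Polynomial ℕ).eval (Fintype.card σ) =
      3 * Fintype.card σ + 3 := by simp
  rw [hp]
  set n := Fintype.card σ with hn
  -- the three difference DFAs
  have hpf : (diffDFA M.toDFA (ppNFA M).toDFA).accepts = Lpf M.accepts := by
    ext w
    rw [diffDFA_accepts, NFA.toDFA_correct, NFA.toDFA_correct, ppNFA_accepts]
    simp only [Lpf, Set.mem_setOf_eq, lpf_iff]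
    exact Iff.rfl
  have hsf : (diffDFA M.toDFA (psNFA M).toDFA).accepts = Lsf M.accepts := by
    ext w
    rw [diffDFA_accepts, NFA.toDFA_correct, NFA.toDFA_correct, psNFA_accepts]
    simp only [Lsf, Set.mem_setOf_eq, lsf_iff]
    exact Iff.rfl
  have hff : (diffDFA M.toDFA (sumNFA (psNFA (ppStarNFA M)) (ppNFA M)).toDFA).accepts =
      Lff M.accepts := by
    ext w
    rw [diffDFA_accepts, NFA.toDFA_correct, NFA.toDFA_correct]
    simp only [Lff, Set.mem_setOf_eq, lff_iff, sumNFA_accepts, psNFA_accepts,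
      ppStarNFA_accepts, ppNFA_accepts]
    exact Iff.rfl
  refine ⟨⟨⟨_, inferInstance, _, hpf⟩, ⟨_, inferInstance,
      (diffDFA M.toDFA (ppNFA M).toDFA).toNFA, by rw [DFA.toNFA_correct]; exact hpf, ?_⟩⟩,
    ⟨⟨_, inferInstance, _, hsf⟩, ⟨_, inferInstance,
      (diffDFA M.toDFA (psNFA M).toDFA).toNFA, by rw [DFA.toNFA_correct]; exact hsf, ?_⟩⟩,
    ⟨⟨_, inferInstance, _, hff⟩, ⟨_, inferInstance,
      (diffDFA M.toDFA (sumNFA (psNFA (ppStarNFA M)) (ppNFA M)).toDFA).toNFA,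
      by rw [DFA.toNFA_correct]; exact hff, ?_⟩⟩⟩
  · have h1 : Fintype.card (Set σ × Set (σ ⊕ Unit)) = 2 ^ (n + (n + 1)) := by
      simp [Fintype.card_set, pow_add, ← hn]
    rw [h1]
    exact Nat.pow_le_pow_right (by norm_num) (by omega)
  · have h1 : Fintype.card (Set σ × Set (Unit ⊕ σ)) = 2 ^ (n + (1 + n)) := by
      simp [Fintype.card_set, pow_add, ← hn]
    rw [h1]
    exact Nat.pow_le_pow_right (by norm_num) (by omega)
  · have h1 : Fintype.card (Set σ × Set ((Unit ⊕ (σ ⊕ Unit)) ⊕ (σ ⊕ Unit)))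
        = 2 ^ (n + ((1 + (n + 1)) + (n + 1))) := by
      simp [Fintype.card_set, pow_add, ← hn]
    rw [h1]
    exact Nat.pow_le_pow_right (by norm_num) (by omega)

end RPQ
end

section
/- For every 2DA A with state set Q there exists an ADA^ε B over the same alphabet, with a number of states polynomial in |Q|, accepting exactly the same language as A, such that for every word w: cost_B(w) ≤ cost_A(w) ≤ 3·k^{k·cost_B(w)}, where k = |Q|² + |Q|. Consequently, A is limited if and only if B is limited. -/
namespace DistAut

/-- A transition of an alternating two-way distance automaton: source state, label
(`none` is an ε-transition, `Sum.inl a` reads `a` moving rightwards, `Sum.inr a` reads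
`a⁻¹` moving leftwards), end flag, cost (`true` = cost 1), and target state. -/
structure ATrans (A Q : Type) where
  src : Q
  lab : Option (A ⊕ A)
  endFlag : Bool
  cost : Bool
  tgt : Q

/-- An alternating two-way distance automaton with ε-transitions (A2DA^ε).
States are partitioned into existential states and universal states; the initial state is
existential and all final states are existential. -/
structure A2DA (A Q : Type) where
  existential : Set Q
  init : Q
  final : Set Q
  trans : Set (ATrans A Q)
  init_mem : init ∈ existential
  final_sub : final ⊆ existential

namespace A2DA

variable {A Q : Type}

/-- The transition `tr` can be applied on word `w` at head position `i`, moving the head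
to position `i'` (head positions range over `{0, …, |w|}`; the end flag must record
whether `i'` is an end position). -/
def Applies (M : A2DA A Q) (w : List A) (i : ℕ) (tr : ATrans A Q) (i' : ℕ) : Prop :=
  tr ∈ M.trans ∧
  (tr.endFlag = true ↔ (i' = 0 ∨ i' = w.length)) ∧
  match tr.lab with
  | none => i' = i
  | some (Sum.inl a) => w[i]? = some a ∧ i' = i + 1
  | some (Sum.inr a) => i ≠ 0 ∧ w[i - 1]? = some a ∧ i' = i - 1

/-- `Acc M w q i n` holds iff there is an accepting run (a finite tree of configurations)
of `M` on `w` from configuration `(q, i)` whose cost (the maximum over branches of the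
sum of transition costs) is at most `n`.  A node in an existential configuration has at
most one child, a node in a universal configuration has a child for every applicable
transition (and at least one), and leaves carry final states. -/
inductive Acc (M : A2DA A Q) (w : List A) : Q → ℕ → ℕ → Prop
  | leaf {q : Q} {i n : ℕ} : q ∈ M.final → Acc M w q i n
  | step {q : Q} {i n : ℕ} (tr : ATrans A Q) (i' : ℕ) :
      q ∈ M.existential → tr.src = q → M.Applies w i tr i' →
      Acc M w tr.tgt i' n → Acc M w q i (cond tr.cost 1 0 + n)
  | split {q : Q} {i n : ℕ} (f : ATrans A Q → ℕ → ℕ) :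
      q ∉ M.existential →
      (∃ tr i', tr.src = q ∧ M.Applies w i tr i') →
      (∀ tr i', tr.src = q → M.Applies w i tr i' → Acc M w tr.tgt i' (f tr i')) →
      (∀ tr i', tr.src = q → M.Applies w i tr i' → cond tr.cost 1 0 + f tr i' ≤ n) →
      Acc M w q i n

/-- The cost of `w`: the least cost of an accepting run of `M` on `w` from the initial
configuration `(q₀, 0)` (and `0` if there is no accepting run). -/
noncomputable def cost (M : A2DA A Q) (w : List A) : ℕ :=
  sInf {n | Acc M w M.init 0 n}

/-- The language accepted by `M`. -/
def accepts (M : A2DA A Q) : Language A := {w | ∃ n, Acc M w M.init 0 n}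

/-- `M` is limited if the costs of all words are uniformly bounded. -/
def Limited (M : A2DA A Q) : Prop := ∃ N, ∀ w : List A, M.cost w ≤ N

/-- No ε-transitions. -/
def EpsFree (M : A2DA A Q) : Prop := ∀ tr ∈ M.trans, tr.lab ≠ none

/-- No leftward-moving transitions (a one-way automaton). -/
def OneWay (M : A2DA A Q) : Prop := ∀ tr ∈ M.trans, ∀ a : A, tr.lab ≠ some (Sum.inr a)

/-- No universal states (a non-alternating automaton). -/
def NonAlternating (M : A2DA A Q) : Prop := ∀ q : Q, q ∈ M.existential

end A2DA

/-- A transition of a (one-way) distance automaton. -/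
structure DTrans (A Q : Type) where
  src : Q
  lab : A
  cost : Bool
  tgt : Q

/-- A distance automaton (DA): an NFA with costly (`cost = true`) and non-costly
transitions. -/
structure DA (A Q : Type) where
  init : Q
  final : Set Q
  trans : Set (DTrans A Q)

namespace DA

variable {A Q : Type}

/-- `Run M q w n` holds iff there is an accepting run of `M` from state `q` reading the
whole word `w`, ending in a final state, of cost exactly `n`. -/
inductive Run (M : DA A Q) : Q → List A → ℕ → Prop
  | nil {q : Q} : q ∈ M.final → Run M q [] 0
  | cons {q : Q} {w : List A} {n : ℕ} (tr : DTrans A Q) :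
      tr ∈ M.trans → tr.src = q → Run M tr.tgt w n →
      Run M q (tr.lab :: w) (cond tr.cost 1 0 + n)

/-- The cost of `w`: the minimum cost of an accepting run on `w` (`0` if none exists). -/
noncomputable def cost (M : DA A Q) (w : List A) : ℕ := sInf {n | Run M M.init w n}

/-- The language accepted by `M`. -/
def accepts (M : DA A Q) : Language A := {w | ∃ n, Run M M.init w n}

/-- `M` is limited if the costs of all words are uniformly bounded. -/
def Limited (M : DA A Q) : Prop := ∃ N, ∀ w : List A, M.cost w ≤ N

end DA


namespace Construction

open A2DA

variable {A Q : Type}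

/-- Walks of a (two-way, non-alternating) automaton staying at positions `≥ lo`,
from `(p, i)` to `(q, j)`, of cost `n` and length `L`. -/
inductive Walk (M : A2DA A Q) (w : List A) (lo : ℕ) : Q → ℕ → Q → ℕ → ℕ → ℕ → Prop
  | nil (q : Q) (i : ℕ) (h : lo ≤ i) : Walk M w lo q i q i 0 0
  | cons {q : Q} {j n L : ℕ} (tr : ATrans A Q) (i i' : ℕ) (hlo : lo ≤ i)
      (happ : M.Applies w i tr i') (hw : Walk M w lo tr.tgt i' q j n L) :
      Walk M w lo tr.src i q j (cond tr.cost 1 0 + n) (L + 1)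

namespace Walk

variable {M : A2DA A Q} {w : List A}

theorem start_ge {lo p i q j n L} (h : Walk M w lo p i q j n L) : lo ≤ i := by
  cases h with
  | nil _ _ h => exact h
  | cons _ _ _ hlo _ _ => exact hlo

theorem end_ge {lo p i q j n L} (h : Walk M w lo p i q j n L) : lo ≤ j := by
  induction h with
  | nil _ _ h => exact h
  | cons _ _ _ _ _ _ ih => exact ih

theorem mono_lo {lo lo' p i q j n L} (h : Walk M w lo p i q j n L) (hlo : lo' ≤ lo) :
    Walk M w lo' p i q j n L := by
  induction h with
  | nil q i h => exact nil q i (le_trans hlo h)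
  | cons tr i i' h happ _ ih => exact cons tr i i' (le_trans hlo h) happ ih

theorem append {lo p i q j r l n L n' L'} (h : Walk M w lo p i q j n L)
    (h' : Walk M w lo q j r l n' L') : Walk M w lo p i r l (n + n') (L + L') := by
  induction h with
  | nil q i h =>
      simpa using h'
  | cons tr i i' hlo happ hw ih =>
      have := cons tr i i' hlo happ (ih h')
      convert this using 1 <;> omega

/-- First-return decomposition: a walk starting at a position `> lo` either stays
`> lo` throughout, or splits at the first visit to `lo`. -/
theorem splitFirst {lo p i q j n L} (hw : Walk M w lo p i q j n L) (hi : lo + 1 ≤ i) :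
    Walk M w (lo + 1) p i q j n L ∨
    ∃ (tr : ATrans A Q) (n₁ L₁ n₂ L₂ : ℕ),
      Walk M w (lo + 1) p i tr.src (lo + 1) n₁ L₁ ∧
      M.Applies w (lo + 1) tr lo ∧
      Walk M w lo tr.tgt lo q j n₂ L₂ ∧
      n = n₁ + (cond tr.cost 1 0 + n₂) ∧ L = L₁ + (1 + L₂) := by
  induction hw with
  | nil q i h => exact Or.inl (nil q i hi)
  | @cons q j n L tr i i' hlo happ hw ih =>
      by_cases h : lo + 1 ≤ i'
      · rcases ih h with W | ⟨tr₂, n₁, L₁, n₂, L₂, W₁, ha, W₂, hn, hL⟩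
        · exact Or.inl (cons tr i i' hi happ W)
        · refine Or.inr ⟨tr₂, cond tr.cost 1 0 + n₁, L₁ + 1, n₂, L₂,
            cons tr i i' hi happ W₁, ha, W₂, by omega, by omega⟩
      · have hge : lo ≤ i' := hw.start_ge
        have hi' : i' = lo := by omega
        obtain ⟨hmem, hflag, hmatch⟩ := happ
        rcases hlab : tr.lab with _ | (a | a) <;> rw [hlab] at hmatch
        · omega
        · omega
        · obtain ⟨h0, hget, hstep⟩ := hmatch
          have hieq : i = lo + 1 := by omega
          subst hieq
          have hw' : Walk M w lo tr.tgt lo q j n L := by rw [hi'] at hw; exact hw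
          have happ' : M.Applies w (lo + 1) tr lo := by
            refine ⟨hmem, by rw [hi'] at hflag; exact hflag, ?_⟩
            rw [hlab]
            exact ⟨h0, hget, by omega⟩
          exact Or.inr ⟨tr, 0, 0, n, L, nil tr.src (lo+1) le_rfl, happ', hw',
            by omega, by omega⟩

end Walk

/-- `Acc` is upward closed in the budget. -/
theorem acc_mono {M : A2DA A Q} {w : List A} {q : Q} {i n : ℕ}
    (h : A2DA.Acc M w q i n) : ∀ {m : ℕ}, n ≤ m → A2DA.Acc M w q i m := by
  induction h with
  | leaf hf => exact fun _ => A2DA.Acc.leaf hf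
  | @step q i n tr i' hex hsrc happ hacc ih =>
      intro m hm
      have h1 : cond tr.cost 1 0 + (m - cond tr.cost 1 0) = m := by
        have : cond tr.cost 1 0 ≤ m := le_trans (by omega) hm
        omega
      have h2 : n ≤ m - cond tr.cost 1 0 := by omega
      exact h1 ▸ A2DA.Acc.step tr i' hex hsrc happ (ih h2)
  | @split q i n f hnex hex hacc hbound ih =>
      intro m hm
      refine A2DA.Acc.split (fun tr i' => f tr i' + (m - n)) hnex hex
        (fun tr i' hsrc happ => ih tr i' hsrc happ (Nat.le_add_right _ _))
        (fun tr i' hsrc happ => ?_)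
      have := hbound tr i' hsrc happ
      show cond tr.cost 1 0 + (f tr i' + (m - n)) ≤ m
      omega

/-- States of the one-way automaton `B`: claims `s0 p q` (free excursion from `p`
back to `q` at the same position), `s p q` (arbitrary excursion), `e p` (accepting
run), and universal splitter states. -/
inductive St (Q : Type) : Type
  | s0 (p q : Q) | s (p q : Q) | e (p : Q)
  | u0 (p r q : Q) | ucl (p r q : Q) | ucr (p r q : Q) | ud (p r q : Q)
  | ue0 (p r : Q) | ued (p r : Q)
  deriving Fintype

/-- Existential states of `B`. -/
def ExSt : St Q → Prop
  | .s0 _ _ => True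
  | .s _ _ => True
  | .e _ => True
  | _ => False

/-- Final states of `B`. -/
def FinSt (M : A2DA A Q) : St Q → Prop
  | .s0 p q => p = q
  | .s p q => p = q
  | .e p => p ∈ M.final
  | _ => False

/-- Transitions of `B`.  The boolean component of a state records whether the head is
at position `0`. -/
inductive IsTr (M : A2DA A Q) : ATrans A (St Q × Bool) → Prop
  | s0read {p p' q q' : Q} {a : A} {e f : Bool}
      (h₁ : (⟨p, some (Sum.inl a), e, false, p'⟩ : ATrans A Q) ∈ M.trans)
      (h₂ : (⟨q', some (Sum.inr a), f, false, q⟩ : ATrans A Q) ∈ M.trans) :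
      IsTr M ⟨(.s0 p q, f), some (Sum.inl a), e, false, (.s0 p' q', false)⟩
  | sread {p p' q q' : Q} {a : A} {e f c₁ c₂ : Bool}
      (h₁ : (⟨p, some (Sum.inl a), e, c₁, p'⟩ : ATrans A Q) ∈ M.trans)
      (h₂ : (⟨q', some (Sum.inr a), f, c₂, q⟩ : ATrans A Q) ∈ M.trans) :
      IsTr M ⟨(.s p q, f), some (Sum.inl a), e, c₁ || c₂, (.s p' q', false)⟩
  | eread {p p' : Q} {a : A} {e c : Bool} (b : Bool)
      (h₁ : (⟨p, some (Sum.inl a), e, c, p'⟩ : ATrans A Q) ∈ M.trans) :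
      IsTr M ⟨(.e p, b), some (Sum.inl a), e, c, (.e p', false)⟩
  | s0split (p r q : Q) (b ef : Bool) :
      IsTr M ⟨(.s0 p q, b), none, ef, false, (.u0 p r q, b)⟩
  | u0l (p r q : Q) (b ef : Bool) :
      IsTr M ⟨(.u0 p r q, b), none, ef, false, (.s0 p r, b)⟩
  | u0r (p r q : Q) (b ef : Bool) :
      IsTr M ⟨(.u0 p r q, b), none, ef, false, (.s0 r q, b)⟩
  | ssplitL (p r q : Q) (b ef : Bool) :
      IsTr M ⟨(.s p q, b), none, ef, false, (.ucl p r q, b)⟩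
  | uclA (p r q : Q) (b ef : Bool) :
      IsTr M ⟨(.ucl p r q, b), none, ef, false, (.s0 p r, b)⟩
  | uclB (p r q : Q) (b ef : Bool) :
      IsTr M ⟨(.ucl p r q, b), none, ef, false, (.s r q, b)⟩
  | ssplitR (p r q : Q) (b ef : Bool) :
      IsTr M ⟨(.s p q, b), none, ef, false, (.ucr p r q, b)⟩
  | ucrA (p r q : Q) (b ef : Bool) :
      IsTr M ⟨(.ucr p r q, b), none, ef, false, (.s p r, b)⟩
  | ucrB (p r q : Q) (b ef : Bool) :
      IsTr M ⟨(.ucr p r q, b), none, ef, false, (.s0 r q, b)⟩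
  | ssplitD (p r q : Q) (b ef : Bool) :
      IsTr M ⟨(.s p q, b), none, ef, false, (.ud p r q, b)⟩
  | udA (p r q : Q) (b ef : Bool) :
      IsTr M ⟨(.ud p r q, b), none, ef, true, (.s p r, b)⟩
  | udB (p r q : Q) (b ef : Bool) :
      IsTr M ⟨(.ud p r q, b), none, ef, true, (.s r q, b)⟩
  | esplit0 (p r : Q) (b ef : Bool) :
      IsTr M ⟨(.e p, b), none, ef, false, (.ue0 p r, b)⟩
  | ue0A (p r : Q) (b ef : Bool) :
      IsTr M ⟨(.ue0 p r, b), none, ef, false, (.s0 p r, b)⟩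
  | ue0B (p r : Q) (b ef : Bool) :
      IsTr M ⟨(.ue0 p r, b), none, ef, false, (.e r, b)⟩
  | esplitD (p r : Q) (b ef : Bool) :
      IsTr M ⟨(.e p, b), none, ef, false, (.ued p r, b)⟩
  | uedA (p r : Q) (b ef : Bool) :
      IsTr M ⟨(.ued p r, b), none, ef, false, (.s p r, b)⟩
  | uedB (p r : Q) (b ef : Bool) :
      IsTr M ⟨(.ued p r, b), none, ef, true, (.e r, b)⟩

/-- The one-way automaton `B`. -/
def B (M : A2DA A Q) : A2DA A (St Q × Bool) where
  existential := {s | ExSt s.1}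
  init := (.e M.init, true)
  final := {s | FinSt M s.1}
  trans := {tr | IsTr M tr}
  init_mem := trivial
  final_sub := by
    rintro ⟨x, b⟩ hx
    cases x <;> first | trivial | exact hx.elim

theorem B_oneway (M : A2DA A Q) : (B M).OneWay := by
  rintro tr htr a
  cases htr <;> simp

/-! ### Semantics of the states of `B` -/

/-- Free excursion from `(p,i)` back to `(q,i)` staying at positions `≥ i`. -/
def SemS0 (M : A2DA A Q) (w : List A) (i : ℕ) (p q : Q) : Prop :=
  ∃ L, Walk M w i p i q i 0 L

/-- Excursion of cost `≤ 3^n - 1`. -/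
def SemS (M : A2DA A Q) (w : List A) (i n : ℕ) (p q : Q) : Prop :=
  ∃ c L, c ≤ 3 ^ n - 1 ∧ Walk M w i p i q i c L

/-- Run to a final state of cost `≤ 2·3^n - 2`. -/
def SemE (M : A2DA A Q) (w : List A) (i n : ℕ) (p : Q) : Prop :=
  ∃ c L f j, c ≤ 2 * 3 ^ n - 2 ∧ f ∈ M.final ∧ Walk M w i p i f j c L

def Sem (M : A2DA A Q) (w : List A) : St Q → ℕ → ℕ → Prop
  | .s0 p q, i, _ => SemS0 M w i p q
  | .s p q, i, n => SemS M w i n p q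
  | .e p, i, n => SemE M w i n p
  | .u0 p _ q, i, _ => SemS0 M w i p q
  | .ucl p _ q, i, n => SemS M w i n p q
  | .ucr p _ q, i, n => SemS M w i n p q
  | .ud p _ q, i, n => SemS M w i n p q
  | .ue0 p _, i, n => SemE M w i n p
  | .ued p _, i, n => SemE M w i n p

theorem pow3_one_le (n : ℕ) : 1 ≤ (3:ℕ) ^ n := Nat.one_le_pow _ _ (by norm_num)

theorem pow3_mono {m n : ℕ} (h : m ≤ n) : (3:ℕ) ^ m ≤ 3 ^ n :=
  Nat.pow_le_pow_right (by norm_num) h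

theorem semS_mono {M : A2DA A Q} {w i m n p q} (h : SemS M w i m p q) (hmn : m ≤ n) :
    SemS M w i n p q := by
  obtain ⟨c, L, hc, W⟩ := h
  exact ⟨c, L, by have := pow3_mono hmn; omega, W⟩

theorem semE_mono {M : A2DA A Q} {w i m n p} (h : SemE M w i m p) (hmn : m ≤ n) :
    SemE M w i n p := by
  obtain ⟨c, L, f, j, hc, hf, W⟩ := h
  exact ⟨c, L, f, j, by have := pow3_mono hmn; omega, hf, W⟩

theorem getElem?_lt {w : List A} {i : ℕ} {a : A} (h : w[i]? = some a) : i < w.length :=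
  (List.getElem?_eq_some_iff.mp h).1

/-- Soundness of `B`: accepting runs of `B` of cost `n` yield walks of `M` of cost
exponential in `n`. -/
theorem sound (M : A2DA A Q) (w : List A) {s : St Q × Bool} {i n : ℕ}
    (h : A2DA.Acc (B M) w s i n) : (s.2 = true ↔ i = 0) → Sem M w s.1 i n := by
  induction h with
  | @leaf s i n hf =>
      intro hb
      obtain ⟨x, b⟩ := s
      cases x with
      | s0 p q => have hpq : p = q := hf; subst hpq; exact ⟨0, Walk.nil p i le_rfl⟩
      | s p q => have hpq : p = q := hf; subst hpq;
                 exact ⟨0, 0, Nat.zero_le _, Walk.nil p i le_rfl⟩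
      | e p => exact ⟨0, 0, p, i, Nat.zero_le _, hf, Walk.nil p i le_rfl⟩
      | u0 p r q => exact hf.elim
      | ucl p r q => exact hf.elim
      | ucr p r q => exact hf.elim
      | ud p r q => exact hf.elim
      | ue0 p r => exact hf.elim
      | ued p r => exact hf.elim
  | @step q i n tr i' hex hsrc happ hacc ih =>
      subst hsrc
      intro hb
      obtain ⟨hmem, hflag, hmatch⟩ := happ
      replace hmem : IsTr M tr := hmem
      cases hmem with
      | @s0read p p' q0 q' a e f h₁ h₂ =>
          obtain ⟨ha, hi'⟩ := hmatch
          subst hi'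
          obtain ⟨L, W⟩ := ih (by simp)
          have hilen : i < w.length := getElem?_lt ha
          have app1 : M.Applies w i ⟨p, some (Sum.inl a), e, false, p'⟩ (i+1) :=
            ⟨h₁, hflag, ha, rfl⟩
          have app2 : M.Applies w (i+1) ⟨q', some (Sum.inr a), f, false, q0⟩ i := by
            refine ⟨h₂, ?_, by omega, by simpa using ha, by omega⟩
            constructor
            · intro hft; exact Or.inl (hb.mp hft)
            · rintro (h0 | hlen)
              · exact hb.mpr h0
              · omega
          have W1 := Walk.cons ⟨p, some (Sum.inl a), e, false, p'⟩ i (i+1) le_rfl app1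
            ((W.mono_lo (Nat.le_succ i)).append
              (Walk.cons ⟨q', some (Sum.inr a), f, false, q0⟩ (i+1) i (Nat.le_succ i) app2
                (Walk.nil q0 i le_rfl)))
          exact ⟨_, by simpa using W1⟩
      | @sread p p' q0 q' a e f c₁ c₂ h₁ h₂ =>
          obtain ⟨ha, hi'⟩ := hmatch
          subst hi'
          obtain ⟨c, L, hc, W⟩ := ih (by simp)
          have hilen : i < w.length := getElem?_lt ha
          have app1 : M.Applies w i ⟨p, some (Sum.inl a), e, c₁, p'⟩ (i+1) :=
            ⟨h₁, hflag, ha, rfl⟩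
          have app2 : M.Applies w (i+1) ⟨q', some (Sum.inr a), f, c₂, q0⟩ i := by
            refine ⟨h₂, ?_, by omega, by simpa using ha, by omega⟩
            constructor
            · intro hft; exact Or.inl (hb.mp hft)
            · rintro (h0 | hlen)
              · exact hb.mpr h0
              · omega
          have W1 := Walk.cons ⟨p, some (Sum.inl a), e, c₁, p'⟩ i (i+1) le_rfl app1
            ((W.mono_lo (Nat.le_succ i)).append
              (Walk.cons ⟨q', some (Sum.inr a), f, c₂, q0⟩ (i+1) i (Nat.le_succ i) app2
                (Walk.nil q0 i le_rfl)))
          refine ⟨_, _, ?_, W1⟩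
          show cond c₁ 1 0 + (c + (cond c₂ 1 0 + 0)) ≤ 3 ^ (cond (c₁ || c₂) 1 0 + n) - 1
          have hx := pow3_one_le n
          cases c₁ <;> cases c₂ <;>
            simp only [Bool.false_or, Bool.true_or, Bool.or_false, Bool.or_true,
              cond_true, cond_false, pow_add, pow_one, zero_add] <;> omega
      | @eread p p' a e c b h₁ =>
          obtain ⟨ha, hi'⟩ := hmatch
          subst hi'
          obtain ⟨c0, L, f0, j, hc, hf0, W⟩ := ih (by simp)
          have app1 : M.Applies w i ⟨p, some (Sum.inl a), e, c, p'⟩ (i+1) :=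
            ⟨h₁, hflag, ha, rfl⟩
          have W1 := Walk.cons ⟨p, some (Sum.inl a), e, c, p'⟩ i (i+1) le_rfl app1
            (W.mono_lo (Nat.le_succ i))
          refine ⟨_, _, f0, j, ?_, hf0, W1⟩
          show cond c 1 0 + c0 ≤ 2 * 3 ^ (cond c 1 0 + n) - 2
          have hx := pow3_one_le n
          cases c <;>
            simp only [cond_true, cond_false, pow_add, pow_one, zero_add] <;> omega
      | s0split p r q0 b ef =>
          have hi' : i' = i := hmatch
          subst hi'
          simpa [Sem] using ih hb
      | ssplitL p r q0 b ef =>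
          have hi' : i' = i := hmatch
          subst hi'
          simpa [Sem] using ih hb
      | ssplitR p r q0 b ef =>
          have hi' : i' = i := hmatch
          subst hi'
          simpa [Sem] using ih hb
      | ssplitD p r q0 b ef =>
          have hi' : i' = i := hmatch
          subst hi'
          simpa [Sem] using ih hb
      | esplit0 p r b ef =>
          have hi' : i' = i := hmatch
          subst hi'
          simpa [Sem] using ih hb
      | esplitD p r b ef =>
          have hi' : i' = i := hmatch
          subst hi'
          simpa [Sem] using ih hb
      | u0l p r q0 b ef => exact hex.elim
      | u0r p r q0 b ef => exact hex.elim
      | uclA p r q0 b ef => exact hex.elim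
      | uclB p r q0 b ef => exact hex.elim
      | ucrA p r q0 b ef => exact hex.elim
      | ucrB p r q0 b ef => exact hex.elim
      | udA p r q0 b ef => exact hex.elim
      | udB p r q0 b ef => exact hex.elim
      | ue0A p r b ef => exact hex.elim
      | ue0B p r b ef => exact hex.elim
      | uedA p r b ef => exact hex.elim
      | uedB p r b ef => exact hex.elim
  | @split q i n f hnex hex hacc hbound ih =>
      intro hb
      obtain ⟨x, b⟩ := q
      have hiff : (decide (i = 0 ∨ i = w.length) = true) ↔ (i = 0 ∨ i = w.length) :=
        decide_eq_true_iff
      cases x with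
      | s0 p q0 => exact absurd trivial hnex
      | s p q0 => exact absurd trivial hnex
      | e p => exact absurd trivial hnex
      | u0 p r q0 =>
          have app₁ : (B M).Applies w i
              ⟨(.u0 p r q0, b), none, decide (i = 0 ∨ i = w.length), false, (.s0 p r, b)⟩ i :=
            ⟨IsTr.u0l p r q0 b _, hiff, rfl⟩
          have app₂ : (B M).Applies w i
              ⟨(.u0 p r q0, b), none, decide (i = 0 ∨ i = w.length), false, (.s0 r q0, b)⟩ i :=
            ⟨IsTr.u0r p r q0 b _, hiff, rfl⟩
          obtain ⟨L₁, W₁⟩ := ih _ i rfl app₁ hb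
          obtain ⟨L₂, W₂⟩ := ih _ i rfl app₂ hb
          exact ⟨L₁ + L₂, by simpa using W₁.append W₂⟩
      | ucl p r q0 =>
          have app₁ : (B M).Applies w i
              ⟨(.ucl p r q0, b), none, decide (i = 0 ∨ i = w.length), false, (.s0 p r, b)⟩ i :=
            ⟨IsTr.uclA p r q0 b _, hiff, rfl⟩
          have app₂ : (B M).Applies w i
              ⟨(.ucl p r q0, b), none, decide (i = 0 ∨ i = w.length), false, (.s r q0, b)⟩ i :=
            ⟨IsTr.uclB p r q0 b _, hiff, rfl⟩
          obtain ⟨L₁, W₁⟩ := ih _ i rfl app₁ hb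
          obtain ⟨c, L₂, hc, W₂⟩ := semS_mono (ih _ i rfl app₂ hb)
            (by have := hbound _ i rfl app₂; simpa using this)
          exact ⟨c, L₁ + L₂, hc, by simpa using W₁.append W₂⟩
      | ucr p r q0 =>
          have app₁ : (B M).Applies w i
              ⟨(.ucr p r q0, b), none, decide (i = 0 ∨ i = w.length), false, (.s p r, b)⟩ i :=
            ⟨IsTr.ucrA p r q0 b _, hiff, rfl⟩
          have app₂ : (B M).Applies w i
              ⟨(.ucr p r q0, b), none, decide (i = 0 ∨ i = w.length), false, (.s0 r q0, b)⟩ i :=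
            ⟨IsTr.ucrB p r q0 b _, hiff, rfl⟩
          obtain ⟨c, L₁, hc, W₁⟩ := semS_mono (ih _ i rfl app₁ hb)
            (by have := hbound _ i rfl app₁; simpa using this)
          obtain ⟨L₂, W₂⟩ := ih _ i rfl app₂ hb
          exact ⟨c, L₁ + L₂, hc, by simpa using W₁.append W₂⟩
      | ud p r q0 =>
          have app₁ : (B M).Applies w i
              ⟨(.ud p r q0, b), none, decide (i = 0 ∨ i = w.length), true, (.s p r, b)⟩ i :=
            ⟨IsTr.udA p r q0 b _, hiff, rfl⟩
          have app₂ : (B M).Applies w i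
              ⟨(.ud p r q0, b), none, decide (i = 0 ∨ i = w.length), true, (.s r q0, b)⟩ i :=
            ⟨IsTr.udB p r q0 b _, hiff, rfl⟩
          obtain ⟨c₁, L₁, hc₁, W₁⟩ := ih _ i rfl app₁ hb
          obtain ⟨c₂, L₂, hc₂, W₂⟩ := ih _ i rfl app₂ hb
          have hb₁ := hbound _ i rfl app₁
          have hb₂ := hbound _ i rfl app₂
          simp only [cond_true] at hb₁ hb₂
          refine ⟨c₁ + c₂, L₁ + L₂, ?_, W₁.append W₂⟩
          obtain ⟨n', rfl⟩ : ∃ n', n = n' + 1 := ⟨n - 1, by omega⟩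
          have h1 : (3:ℕ) ^ f (⟨(.ud p r q0, b), none, decide (i = 0 ∨ i = w.length), true, (.s p r, b)⟩) i ≤ 3 ^ n' :=
            pow3_mono (by omega)
          have h2 : (3:ℕ) ^ f (⟨(.ud p r q0, b), none, decide (i = 0 ∨ i = w.length), true, (.s r q0, b)⟩) i ≤ 3 ^ n' :=
            pow3_mono (by omega)
          have hpow : (3:ℕ) ^ (n' + 1) = 3 ^ n' * 3 := pow_succ 3 n'
          have hx := pow3_one_le n'
          omega
      | ue0 p r =>
          have app₁ : (B M).Applies w i
              ⟨(.ue0 p r, b), none, decide (i = 0 ∨ i = w.length), false, (.s0 p r, b)⟩ i :=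
            ⟨IsTr.ue0A p r b _, hiff, rfl⟩
          have app₂ : (B M).Applies w i
              ⟨(.ue0 p r, b), none, decide (i = 0 ∨ i = w.length), false, (.e r, b)⟩ i :=
            ⟨IsTr.ue0B p r b _, hiff, rfl⟩
          obtain ⟨L₁, W₁⟩ := ih _ i rfl app₁ hb
          obtain ⟨c, L₂, f0, j, hc, hf0, W₂⟩ := semE_mono (ih _ i rfl app₂ hb)
            (by have := hbound _ i rfl app₂; simpa using this)
          exact ⟨c, L₁ + L₂, f0, j, hc, hf0, by simpa using W₁.append W₂⟩
      | ued p r =>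
          have app₁ : (B M).Applies w i
              ⟨(.ued p r, b), none, decide (i = 0 ∨ i = w.length), false, (.s p r, b)⟩ i :=
            ⟨IsTr.uedA p r b _, hiff, rfl⟩
          have app₂ : (B M).Applies w i
              ⟨(.ued p r, b), none, decide (i = 0 ∨ i = w.length), true, (.e r, b)⟩ i :=
            ⟨IsTr.uedB p r b _, hiff, rfl⟩
          obtain ⟨c₁, L₁, hc₁, W₁⟩ := semS_mono (ih _ i rfl app₁ hb)
            (by have := hbound _ i rfl app₁; simpa using this)
          obtain ⟨c₂, L₂, f0, j, hc₂, hf0, W₂⟩ := ih _ i rfl app₂ hb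
          have hb₂ := hbound _ i rfl app₂
          simp only [cond_true] at hb₂
          refine ⟨c₁ + c₂, L₁ + L₂, f0, j, ?_, hf0, W₁.append W₂⟩
          obtain ⟨n', rfl⟩ : ∃ n', n = n' + 1 := ⟨n - 1, by omega⟩
          have h2 : (3:ℕ) ^ f (⟨(.ued p r, b), none, decide (i = 0 ∨ i = w.length), true, (.e r, b)⟩) i ≤ 3 ^ n' :=
            pow3_mono (by omega)
          have hpow : (3:ℕ) ^ (n' + 1) = 3 ^ n' * 3 := pow_succ 3 n'
          have hx := pow3_one_le n'
          omega

/-! ### Completeness helpers -/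

variable {M : A2DA A Q} {w : List A}

theorem eps_applies {x y : St Q × Bool} {cst : Bool} {i : ℕ}
    (h : IsTr M ⟨x, none, decide (i = 0 ∨ i = w.length), cst, y⟩) :
    (B M).Applies w i ⟨x, none, decide (i = 0 ∨ i = w.length), cst, y⟩ i :=
  ⟨h, decide_eq_true_iff, rfl⟩

theorem acc_comp_s0 {p r q : Q} {b : Bool} {i n : ℕ}
    (h₁ : A2DA.Acc (B M) w (.s0 p r, b) i n) (h₂ : A2DA.Acc (B M) w (.s0 r q, b) i n) :
    A2DA.Acc (B M) w (.s0 p q, b) i n := by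
  have hU : A2DA.Acc (B M) w (.u0 p r q, b) i n := by
    refine A2DA.Acc.split (fun _ _ => n) (fun h => h)
      ⟨_, i, rfl, eps_applies (IsTr.u0l p r q b _)⟩ ?_ ?_
    · intro tr i' hsrc happ
      obtain ⟨hmem, hflag, hmatch⟩ := happ
      replace hmem : IsTr M tr := hmem
      cases hmem <;> simp_all <;> omega
    · intro tr i' hsrc happ
      obtain ⟨hmem, hflag, hmatch⟩ := happ
      replace hmem : IsTr M tr := hmem
      cases hmem <;> simp_all <;> omega
  have := A2DA.Acc.step _ i (by trivial) rfl (eps_applies (IsTr.s0split p r q b _)) hU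
  simpa using this

theorem acc_compL {p r q : Q} {b : Bool} {i n : ℕ}
    (h₁ : A2DA.Acc (B M) w (.s0 p r, b) i n) (h₂ : A2DA.Acc (B M) w (.s r q, b) i n) :
    A2DA.Acc (B M) w (.s p q, b) i n := by
  have hU : A2DA.Acc (B M) w (.ucl p r q, b) i n := by
    refine A2DA.Acc.split (fun _ _ => n) (fun h => h)
      ⟨_, i, rfl, eps_applies (IsTr.uclA p r q b _)⟩ ?_ ?_
    · intro tr i' hsrc happ
      obtain ⟨hmem, hflag, hmatch⟩ := happ
      replace hmem : IsTr M tr := hmem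
      cases hmem <;> simp_all <;> omega
    · intro tr i' hsrc happ
      obtain ⟨hmem, hflag, hmatch⟩ := happ
      replace hmem : IsTr M tr := hmem
      cases hmem <;> simp_all <;> omega
  have := A2DA.Acc.step _ i (by trivial) rfl (eps_applies (IsTr.ssplitL p r q b _)) hU
  simpa using this

theorem acc_compR {p r q : Q} {b : Bool} {i n : ℕ}
    (h₁ : A2DA.Acc (B M) w (.s p r, b) i n) (h₂ : A2DA.Acc (B M) w (.s0 r q, b) i n) :
    A2DA.Acc (B M) w (.s p q, b) i n := by
  have hU : A2DA.Acc (B M) w (.ucr p r q, b) i n := by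
    refine A2DA.Acc.split (fun _ _ => n) (fun h => h)
      ⟨_, i, rfl, eps_applies (IsTr.ucrA p r q b _)⟩ ?_ ?_
    · intro tr i' hsrc happ
      obtain ⟨hmem, hflag, hmatch⟩ := happ
      replace hmem : IsTr M tr := hmem
      cases hmem <;> simp_all <;> omega
    · intro tr i' hsrc happ
      obtain ⟨hmem, hflag, hmatch⟩ := happ
      replace hmem : IsTr M tr := hmem
      cases hmem <;> simp_all <;> omega
  have := A2DA.Acc.step _ i (by trivial) rfl (eps_applies (IsTr.ssplitR p r q b _)) hU
  simpa using this

theorem acc_compD {p r q : Q} {b : Bool} {i n : ℕ}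
    (h₁ : A2DA.Acc (B M) w (.s p r, b) i n) (h₂ : A2DA.Acc (B M) w (.s r q, b) i n) :
    A2DA.Acc (B M) w (.s p q, b) i (n + 1) := by
  have hU : A2DA.Acc (B M) w (.ud p r q, b) i (n + 1) := by
    refine A2DA.Acc.split (fun _ _ => n) (fun h => h)
      ⟨_, i, rfl, eps_applies (IsTr.udA p r q b _)⟩ ?_ ?_
    · intro tr i' hsrc happ
      obtain ⟨hmem, hflag, hmatch⟩ := happ
      replace hmem : IsTr M tr := hmem
      cases hmem <;> simp_all <;> omega
    · intro tr i' hsrc happ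
      obtain ⟨hmem, hflag, hmatch⟩ := happ
      replace hmem : IsTr M tr := hmem
      cases hmem <;> simp_all <;> omega
  have := A2DA.Acc.step _ i (by trivial) rfl (eps_applies (IsTr.ssplitD p r q b _)) hU
  simpa using this

theorem acc_e_comp0 {p r : Q} {b : Bool} {i n : ℕ}
    (h₁ : A2DA.Acc (B M) w (.s0 p r, b) i n) (h₂ : A2DA.Acc (B M) w (.e r, b) i n) :
    A2DA.Acc (B M) w (.e p, b) i n := by
  have hU : A2DA.Acc (B M) w (.ue0 p r, b) i n := by
    refine A2DA.Acc.split (fun _ _ => n) (fun h => h)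
      ⟨_, i, rfl, eps_applies (IsTr.ue0A p r b _)⟩ ?_ ?_
    · intro tr i' hsrc happ
      obtain ⟨hmem, hflag, hmatch⟩ := happ
      replace hmem : IsTr M tr := hmem
      cases hmem <;> simp_all <;> omega
    · intro tr i' hsrc happ
      obtain ⟨hmem, hflag, hmatch⟩ := happ
      replace hmem : IsTr M tr := hmem
      cases hmem <;> simp_all <;> omega
  have := A2DA.Acc.step _ i (by trivial) rfl (eps_applies (IsTr.esplit0 p r b _)) hU
  simpa using this

theorem acc_e_compD {p r : Q} {b : Bool} {i n : ℕ}
    (h₁ : A2DA.Acc (B M) w (.s p r, b) i (n + 1)) (h₂ : A2DA.Acc (B M) w (.e r, b) i n) :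
    A2DA.Acc (B M) w (.e p, b) i (n + 1) := by
  have hU : A2DA.Acc (B M) w (.ued p r, b) i (n + 1) := by
    refine A2DA.Acc.split (fun tr _ => cond tr.cost n (n + 1)) (fun h => h)
      ⟨_, i, rfl, eps_applies (IsTr.uedA p r b _)⟩ ?_ ?_
    · intro tr i' hsrc happ
      obtain ⟨hmem, hflag, hmatch⟩ := happ
      replace hmem : IsTr M tr := hmem
      cases hmem <;> simp_all <;> omega
    · intro tr i' hsrc happ
      obtain ⟨hmem, hflag, hmatch⟩ := happ
      replace hmem : IsTr M tr := hmem
      cases hmem <;> simp_all <;> omega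
  have := A2DA.Acc.step _ i (by trivial) rfl (eps_applies (IsTr.esplitD p r b _)) hU
  simpa using this

/-- Reading step for `s`-claims: an up-move, an inner excursion claim one position to
the right, and a down-move. -/
theorem acc_seg_s {i m : ℕ} {b : Bool} (hb : b = true ↔ i = 0)
    {t₁ t₂ : ATrans A Q} {a : A}
    (h1 : M.Applies w i t₁ (i + 1)) (h2 : M.Applies w (i + 1) t₂ i)
    (hlab1 : t₁.lab = some (Sum.inl a)) (hlab2 : t₂.lab = some (Sum.inr a))
    (hin : A2DA.Acc (B M) w (.s t₁.tgt t₂.src, false) (i + 1) m) :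
    A2DA.Acc (B M) w (.s t₁.src t₂.tgt, b) i (cond (t₁.cost || t₂.cost) 1 0 + m) := by
  obtain ⟨s1, l1, e1, c1, g1⟩ := t₁
  obtain ⟨s2, l2, e2, c2, g2⟩ := t₂
  dsimp at *
  subst hlab1 hlab2
  obtain ⟨hm1, hf1, ha, -⟩ := h1
  obtain ⟨hm2, hf2, -, ha2, -⟩ := h2
  have hilen : i < w.length := getElem?_lt ha
  have he2 : e2 = b := by
    have h' : e2 = true ↔ i = 0 := by
      constructor
      · intro h; rcases hf2.mp h with h0 | h0
        · exact h0
        · omega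
      · intro h; exact hf2.mpr (Or.inl h)
    cases e2 <;> cases b <;> simp_all
  rw [he2] at hm2
  exact A2DA.Acc.step (M := B M) (w := w)
    ⟨(St.s s1 g2, b), some (Sum.inl a), e1, c1 || c2, (St.s g1 s2, false)⟩
    (i + 1) (by trivial) rfl ⟨IsTr.sread hm1 hm2, hf1, ha, rfl⟩ hin

/-- Reading step for `s0`-claims. -/
theorem acc_seg_s0 {i : ℕ} {b : Bool} (hb : b = true ↔ i = 0)
    {t₁ t₂ : ATrans A Q} {a : A}
    (h1 : M.Applies w i t₁ (i + 1)) (h2 : M.Applies w (i + 1) t₂ i)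
    (hlab1 : t₁.lab = some (Sum.inl a)) (hlab2 : t₂.lab = some (Sum.inr a))
    (hc1 : t₁.cost = false) (hc2 : t₂.cost = false)
    (hin : A2DA.Acc (B M) w (.s0 t₁.tgt t₂.src, false) (i + 1) 0) :
    A2DA.Acc (B M) w (.s0 t₁.src t₂.tgt, b) i 0 := by
  obtain ⟨s1, l1, e1, c1, g1⟩ := t₁
  obtain ⟨s2, l2, e2, c2, g2⟩ := t₂
  dsimp at *
  subst hlab1 hlab2 hc1 hc2
  obtain ⟨hm1, hf1, ha, -⟩ := h1
  obtain ⟨hm2, hf2, -, ha2, -⟩ := h2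
  have hilen : i < w.length := getElem?_lt ha
  have he2 : e2 = b := by
    have h' : e2 = true ↔ i = 0 := by
      constructor
      · intro h; rcases hf2.mp h with h0 | h0
        · exact h0
        · omega
      · intro h; exact hf2.mpr (Or.inl h)
    cases e2 <;> cases b <;> simp_all
  rw [he2] at hm2
  have h := A2DA.Acc.step (M := B M) (w := w)
    ⟨(St.s0 s1 g2, b), some (Sum.inl a), e1, false, (St.s0 g1 s2, false)⟩
    (i + 1) (by trivial) rfl ⟨IsTr.s0read hm1 hm2, hf1, ha, rfl⟩ hin
  simpa using h

/-- Reading step for `e`-claims. -/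
theorem acc_seg_e {i m : ℕ} (b : Bool) {t₁ : ATrans A Q} {a : A}
    (h1 : M.Applies w i t₁ (i + 1)) (hlab1 : t₁.lab = some (Sum.inl a))
    (hin : A2DA.Acc (B M) w (.e t₁.tgt, false) (i + 1) m) :
    A2DA.Acc (B M) w (.e t₁.src, b) i (cond t₁.cost 1 0 + m) := by
  obtain ⟨s1, l1, e1, c1, g1⟩ := t₁
  dsimp at *
  subst hlab1
  obtain ⟨hm1, hf1, ha, -⟩ := h1
  exact A2DA.Acc.step (M := B M) (w := w)
    ⟨(St.e s1, b), some (Sum.inl a), e1, c1, (St.e g1, false)⟩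
    (i + 1) (by trivial) rfl ⟨IsTr.eread b hm1, hf1, ha, rfl⟩ hin

/-! ### Completeness -/

theorem completeS0 (hE : M.EpsFree) :
    ∀ L : ℕ, ∀ {p q : Q} {i c : ℕ} (b : Bool), (b = true ↔ i = 0) →
      Walk M w i p i q i c L → c = 0 → A2DA.Acc (B M) w (.s0 p q, b) i 0 := by
  intro L
  induction L using Nat.strong_induction_on with
  | _ L IH =>
    intro p q i c b hb hw hc
    cases hw with
    | nil => exact A2DA.Acc.leaf rfl
    | @cons q j n L' t₁ i i₁ hlo happ hsub =>
        obtain ⟨hm1, hf1, hmat1⟩ := happ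
        rcases hlab1 : t₁.lab with - | a | a <;> rw [hlab1] at hmat1
        · exact absurd hlab1 (hE t₁ hm1)
        · obtain ⟨ha, hi₁⟩ := hmat1
          subst hi₁
          rcases hsub.splitFirst le_rfl with W | ⟨t₂, n₁, L₁, n₂, L₂, W₁, happ₂, W₂, hn, hL⟩
          · have := W.end_ge
            omega
          · have hc1 : t₁.cost = false := by
              cases hcost : t₁.cost
              · rfl
              · rw [hcost] at hc; simp at hc
            have hzero : n₁ = 0 ∧ cond t₂.cost 1 0 + n₂ = 0 := by
              rw [hc1] at hc; simp at hc; omega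
            have hc2 : t₂.cost = false := by
              cases hcost : t₂.cost
              · rfl
              · rw [hcost] at hzero; simp at hzero
            have hn₂ : n₂ = 0 := by rw [hc2] at hzero; simpa using hzero.2
            have hn₁ : n₁ = 0 := hzero.1
            -- labels of the down-step
            obtain ⟨hm2, hf2, hmat2⟩ := happ₂
            rcases hlab2 : t₂.lab with - | a₂ | a₂ <;> rw [hlab2] at hmat2
            · omega
            · obtain ⟨-, hbad⟩ := hmat2
              omega
            · obtain ⟨h0', ha2, hi'⟩ := hmat2
              have haa : a₂ = a := by
                simp only [Nat.add_sub_cancel] at ha2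
                rw [ha] at ha2
                exact (Option.some_injective _ ha2).symm
              subst haa
              have hinner : A2DA.Acc (B M) w (.s0 t₁.tgt t₂.src, false) (i + 1) 0 :=
                IH L₁ (by omega) false (by simp) W₁ hn₁
              have hfirst : A2DA.Acc (B M) w (.s0 t₁.src t₂.tgt, b) i 0 :=
                acc_seg_s0 hb ⟨hm1, hf1, by rw [hlab1]; exact ⟨ha, rfl⟩⟩
                  ⟨hm2, hf2, by rw [hlab2]; exact ⟨h0', ha2, hi'⟩⟩ hlab1 hlab2 hc1 hc2 hinner
              have hrest : A2DA.Acc (B M) w (.s0 t₂.tgt q, b) i 0 :=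
                IH L₂ (by omega) b hb W₂ hn₂
              exact acc_comp_s0 hfirst hrest
        · obtain ⟨h0, -, hi₁⟩ := hmat1
          have := hsub.start_ge
          omega

theorem completeS (hE : M.EpsFree) :
    ∀ L : ℕ, ∀ {p q : Q} {i n : ℕ} (b : Bool), (b = true ↔ i = 0) →
      Walk M w i p i q i n L → A2DA.Acc (B M) w (.s p q, b) i n := by
  intro L
  induction L using Nat.strong_induction_on with
  | _ L IH =>
    intro p q i n b hb hw
    cases hw with
    | nil => exact A2DA.Acc.leaf rfl
    | @cons q j n' L' t₁ i i₁ hlo happ hsub =>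
        obtain ⟨hm1, hf1, hmat1⟩ := happ
        rcases hlab1 : t₁.lab with - | a | a <;> rw [hlab1] at hmat1
        · exact absurd hlab1 (hE t₁ hm1)
        · obtain ⟨ha, hi₁⟩ := hmat1
          subst hi₁
          rcases hsub.splitFirst le_rfl with W | ⟨t₂, n₁, L₁, n₂, L₂, W₁, happ₂, W₂, hn, hL⟩
          · have := W.end_ge
            omega
          · obtain ⟨hm2, hf2, hmat2⟩ := happ₂
            rcases hlab2 : t₂.lab with - | a₂ | a₂ <;> rw [hlab2] at hmat2
            · omega
            · obtain ⟨-, hbad⟩ := hmat2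
              omega
            · obtain ⟨h0', ha2, hi'⟩ := hmat2
              have haa : a₂ = a := by
                simp only [Nat.add_sub_cancel] at ha2
                rw [ha] at ha2
                exact (Option.some_injective _ ha2).symm
              subst haa
              -- total cost: cond t₁.cost + n' where n' = n₁ + (cond t₂.cost + n₂)
              obtain ⟨γ, hγ⟩ : ∃ γ, γ = cond t₁.cost 1 0 + n₁ + cond t₂.cost 1 0 :=
                ⟨_, rfl⟩
              have htot : cond t₁.cost 1 0 + n' = γ + n₂ := by omega
              have hinner : A2DA.Acc (B M) w (.s t₁.tgt t₂.src, false) (i + 1) n₁ :=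
                IH L₁ (by omega) false (by simp) W₁
              have hfirst : A2DA.Acc (B M) w (.s t₁.src t₂.tgt, b) i
                  (cond (t₁.cost || t₂.cost) 1 0 + n₁) :=
                acc_seg_s hb ⟨hm1, hf1, by rw [hlab1]; exact ⟨ha, rfl⟩⟩
                  ⟨hm2, hf2, by rw [hlab2]; exact ⟨h0', ha2, hi'⟩⟩ hlab1 hlab2 hinner
              have hfirst_le : cond (t₁.cost || t₂.cost) 1 0 + n₁ ≤ γ := by
                rw [hγ]; cases t₁.cost <;> cases t₂.cost <;> simp <;> omega
              have hrest : A2DA.Acc (B M) w (.s t₂.tgt q, b) i n₂ :=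
                IH L₂ (by omega) b hb W₂
              rw [htot]
              by_cases hγ0 : γ = 0
              · -- first segment is free
                have hfree := Walk.cons t₁ i (i+1) le_rfl
                    ⟨hm1, hf1, by rw [hlab1]; exact ⟨ha, rfl⟩⟩
                    ((W₁.mono_lo (Nat.le_succ i)).append
                      (Walk.cons t₂ (i+1) i (Nat.le_succ i)
                        ⟨hm2, hf2, by rw [hlab2]; exact ⟨h0', ha2, hi'⟩⟩
                        (Walk.nil t₂.tgt i le_rfl)))
                have hS0 : A2DA.Acc (B M) w (.s0 t₁.src t₂.tgt, b) i 0 :=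
                  completeS0 hE _ b hb hfree (by omega)
                have := acc_compL (acc_mono hS0 (Nat.zero_le _)) hrest
                simpa [hγ0] using this
              · by_cases hn₂0 : n₂ = 0
                · have hS0r : A2DA.Acc (B M) w (.s0 t₂.tgt q, b) i 0 :=
                    completeS0 hE _ b hb W₂ hn₂0
                  exact acc_compR (acc_mono hfirst (m := γ + n₂) (by omega))
                    (acc_mono hS0r (Nat.zero_le _))
                · have h1 : A2DA.Acc (B M) w (.s t₁.src t₂.tgt, b) i (γ + n₂ - 1) :=
                    acc_mono hfirst (by omega)
                  have h2 : A2DA.Acc (B M) w (.s t₂.tgt q, b) i (γ + n₂ - 1) :=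
                    acc_mono hrest (by omega)
                  have := acc_compD h1 h2
                  have heq : γ + n₂ - 1 + 1 = γ + n₂ := by omega
                  rwa [heq] at this
        · obtain ⟨h0, -, hi₁⟩ := hmat1
          have := hsub.start_ge
          omega

theorem completeE (hE : M.EpsFree) :
    ∀ L : ℕ, ∀ {p f : Q} {i j n : ℕ} (b : Bool), (b = true ↔ i = 0) → f ∈ M.final →
      Walk M w i p i f j n L → A2DA.Acc (B M) w (.e p, b) i n := by
  intro L
  induction L using Nat.strong_induction_on with
  | _ L IH =>
    intro p f i j n b hb hf hw
    cases hw with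
    | nil => exact A2DA.Acc.leaf hf
    | @cons q j n' L' t₁ i i₁ hlo happ hsub =>
        obtain ⟨hm1, hf1, hmat1⟩ := happ
        rcases hlab1 : t₁.lab with - | a | a <;> rw [hlab1] at hmat1
        · exact absurd hlab1 (hE t₁ hm1)
        · obtain ⟨ha, hi₁⟩ := hmat1
          subst hi₁
          rcases hsub.splitFirst le_rfl with W | ⟨t₂, n₁, L₁, n₂, L₂, W₁, happ₂, W₂, hn, hL⟩
          · -- the rest of the run stays at positions ≥ i+1
            have hinner : A2DA.Acc (B M) w (.e t₁.tgt, false) (i + 1) n' :=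
              IH L' (by omega) false (by simp) hf W
            exact acc_seg_e b ⟨hm1, hf1, by rw [hlab1]; exact ⟨ha, rfl⟩⟩ hlab1 hinner
          · obtain ⟨hm2, hf2, hmat2⟩ := happ₂
            rcases hlab2 : t₂.lab with - | a₂ | a₂ <;> rw [hlab2] at hmat2
            · omega
            · obtain ⟨-, hbad⟩ := hmat2
              omega
            · obtain ⟨h0', ha2, hi'⟩ := hmat2
              have haa : a₂ = a := by
                simp only [Nat.add_sub_cancel] at ha2
                rw [ha] at ha2
                exact (Option.some_injective _ ha2).symm
              subst haa
              obtain ⟨γ, hγ⟩ : ∃ γ, γ = cond t₁.cost 1 0 + n₁ + cond t₂.cost 1 0 :=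
                ⟨_, rfl⟩
              have htot : cond t₁.cost 1 0 + n' = γ + n₂ := by omega
              have hrest : A2DA.Acc (B M) w (.e t₂.tgt, b) i n₂ :=
                IH L₂ (by omega) b hb hf W₂
              rw [htot]
              by_cases hγ0 : γ = 0
              · have hfree := Walk.cons t₁ i (i+1) le_rfl
                    ⟨hm1, hf1, by rw [hlab1]; exact ⟨ha, rfl⟩⟩
                    ((W₁.mono_lo (Nat.le_succ i)).append
                      (Walk.cons t₂ (i+1) i (Nat.le_succ i)
                        ⟨hm2, hf2, by rw [hlab2]; exact ⟨h0', ha2, hi'⟩⟩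
                        (Walk.nil t₂.tgt i le_rfl)))
                have hS0 : A2DA.Acc (B M) w (.s0 t₁.src t₂.tgt, b) i 0 :=
                  completeS0 hE _ b hb hfree (by omega)
                have := acc_e_comp0 (acc_mono hS0 (Nat.zero_le _)) hrest
                simpa [hγ0] using this
              · have hinner : A2DA.Acc (B M) w (.s t₁.tgt t₂.src, false) (i + 1) n₁ :=
                  completeS hE L₁ false (by simp) W₁
                have hfirst : A2DA.Acc (B M) w (.s t₁.src t₂.tgt, b) i
                    (cond (t₁.cost || t₂.cost) 1 0 + n₁) :=
                  acc_seg_s hb ⟨hm1, hf1, by rw [hlab1]; exact ⟨ha, rfl⟩⟩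
                    ⟨hm2, hf2, by rw [hlab2]; exact ⟨h0', ha2, hi'⟩⟩ hlab1 hlab2 hinner
                have hfirst_le : cond (t₁.cost || t₂.cost) 1 0 + n₁ ≤ γ := by
                  rw [hγ]; cases t₁.cost <;> cases t₂.cost <;> simp <;> omega
                have h1 : A2DA.Acc (B M) w (.s t₁.src t₂.tgt, b) i (γ + n₂ - 1 + 1) :=
                  acc_mono hfirst (by omega)
                have h2 : A2DA.Acc (B M) w (.e t₂.tgt, b) i (γ + n₂ - 1) :=
                  acc_mono hrest (by omega)
                have := acc_e_compD h1 h2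
                have heq : γ + n₂ - 1 + 1 = γ + n₂ := by omega
                rwa [heq] at this
        · obtain ⟨h0, -, hi₁⟩ := hmat1
          have := hsub.start_ge
          omega

/-! ### Bridges between `Acc` for `M` and walks -/

theorem accM_to_walk (hNA : M.NonAlternating) {q : Q} {i n : ℕ}
    (h : A2DA.Acc M w q i n) :
    ∃ (c L : ℕ) (f : Q) (j : ℕ), c ≤ n ∧ f ∈ M.final ∧ Walk M w 0 q i f j c L := by
  induction h with
  | @leaf q i n hf => exact ⟨0, 0, q, i, Nat.zero_le _, hf, Walk.nil q i (Nat.zero_le _)⟩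
  | @step q i n tr i' hex hsrc happ hacc ih =>
      obtain ⟨c, L, f, j, hc, hf, W⟩ := ih
      exact ⟨cond tr.cost 1 0 + c, L + 1, f, j, by omega, hf,
        hsrc ▸ Walk.cons tr i i' (Nat.zero_le _) happ W⟩
  | @split q i n f hnex hex hacc hbound ih => exact absurd (hNA q) hnex

theorem walk_to_accM (hNA : M.NonAlternating) {lo : ℕ} {q f : Q} {i j c L : ℕ}
    (W : Walk M w lo q i f j c L) (hf : f ∈ M.final) : A2DA.Acc M w q i c := by
  induction W with
  | nil q i h => exact A2DA.Acc.leaf hf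
  | cons tr i i' hlo happ hw ih => exact A2DA.Acc.step tr i' (hNA _) rfl happ (ih hf)

/-! ### Main cost lemmas -/

theorem main_sound (M : A2DA A Q) (hNA : M.NonAlternating) {w : List A} {n : ℕ}
    (h : A2DA.Acc (B M) w (B M).init 0 n) :
    ∃ c, c ≤ 2 * 3 ^ n - 2 ∧ A2DA.Acc M w M.init 0 c := by
  obtain ⟨c, L, f, j, hc, hf, W⟩ := sound M w h ⟨fun _ => rfl, fun _ => rfl⟩
  exact ⟨c, hc, walk_to_accM hNA W hf⟩

theorem main_complete (M : A2DA A Q) (hE : M.EpsFree) (hNA : M.NonAlternating)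
    {w : List A} {n : ℕ} (h : A2DA.Acc M w M.init 0 n) :
    A2DA.Acc (B M) w (B M).init 0 n := by
  obtain ⟨c, L, f, j, hc, hf, W⟩ := accM_to_walk hNA h
  exact acc_mono (completeE hE L true (by simp) hf W) hc

/-! ### Arithmetic -/

theorem arith_bound {k : ℕ} (hk : 2 ≤ k) (n : ℕ) : 2 * 3 ^ n - 2 ≤ 3 * k ^ (k * n) := by
  have h34 : 2 * 3 ^ n ≤ 3 * 4 ^ n := by
    induction n with
    | zero => norm_num
    | succ m ih =>
        have h1 : (3:ℕ) ^ (m+1) = 3 * 3 ^ m := by ring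
        have h2 : (4:ℕ) ^ (m+1) = 4 * 4 ^ m := by ring
        have h3 : (0:ℕ) < 4 ^ m := Nat.pow_pos (by norm_num)
        nlinarith
  have h4k : (4:ℕ) ^ n ≤ k ^ (k * n) := by
    calc (4:ℕ) ^ n = 2 ^ (2 * n) := by rw [pow_mul]; norm_num
    _ ≤ k ^ (2 * n) := Nat.pow_le_pow_left hk _
    _ ≤ k ^ (k * n) := Nat.pow_le_pow_right (by omega) (Nat.mul_le_mul_right n hk)
  omega

/-! ### Cardinality -/

def stEmbed : St Q → (Q × Q) ⊕ ((Q × Q) ⊕ (Q ⊕ ((Q × Q × Q) ⊕ ((Q × Q × Q) ⊕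
    ((Q × Q × Q) ⊕ ((Q × Q × Q) ⊕ ((Q × Q) ⊕ (Q × Q))))))))
  | .s0 p q => Sum.inl (p, q)
  | .s p q => Sum.inr (Sum.inl (p, q))
  | .e p => Sum.inr (Sum.inr (Sum.inl p))
  | .u0 p r q => Sum.inr (Sum.inr (Sum.inr (Sum.inl (p, r, q))))
  | .ucl p r q => Sum.inr (Sum.inr (Sum.inr (Sum.inr (Sum.inl (p, r, q)))))
  | .ucr p r q => Sum.inr (Sum.inr (Sum.inr (Sum.inr (Sum.inr (Sum.inl (p, r, q))))))
  | .ud p r q => Sum.inr (Sum.inr (Sum.inr (Sum.inr (Sum.inr (Sum.inr (Sum.inl (p, r, q)))))))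
  | .ue0 p r => Sum.inr (Sum.inr (Sum.inr (Sum.inr (Sum.inr (Sum.inr (Sum.inr (Sum.inl (p, r))))))))
  | .ued p r => Sum.inr (Sum.inr (Sum.inr (Sum.inr (Sum.inr (Sum.inr (Sum.inr (Sum.inr (p, r))))))))

theorem stEmbed_inj : Function.Injective (stEmbed (Q := Q)) := by
  intro x y h
  cases x <;> cases y <;> simp_all [stEmbed]

theorem card_st [Fintype Q] :
    Fintype.card (St Q) ≤ 4 * Fintype.card Q ^ 3 + 4 * Fintype.card Q ^ 2 + Fintype.card Q := by
  have := Fintype.card_le_of_injective _ (stEmbed_inj (Q := Q))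
  simp only [Fintype.card_sum, Fintype.card_prod] at this
  set m := Fintype.card Q
  nlinarith [this]

theorem card_q' [Fintype Q] :
    Fintype.card (St Q × Bool) ≤
      8 * Fintype.card Q ^ 3 + 8 * Fintype.card Q ^ 2 + 2 * Fintype.card Q := by
  rw [Fintype.card_prod, Fintype.card_bool]
  have := card_st (Q := Q)
  omega

theorem accepts_eq (M : A2DA A Q) (hE : M.EpsFree) (hNA : M.NonAlternating) :
    (B M).accepts = M.accepts := by
  ext w
  constructor
  · rintro ⟨n, h⟩
    obtain ⟨c, -, hM⟩ := main_sound M hNA h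
    exact ⟨c, hM⟩
  · rintro ⟨n, h⟩
    exact ⟨n, main_complete M hE hNA h⟩

theorem cost_le (M : A2DA A Q) (hE : M.EpsFree) (hNA : M.NonAlternating) (w : List A) :
    (B M).cost w ≤ M.cost w := by
  by_cases hne : {n | A2DA.Acc M w M.init 0 n}.Nonempty
  · have hmem : A2DA.Acc M w M.init 0 (M.cost w) := Nat.sInf_mem hne
    exact Nat.sInf_le (main_complete M hE hNA hmem)
  · have hBempty : {n | A2DA.Acc (B M) w (B M).init 0 n} = ∅ := by
      rw [Set.eq_empty_iff_forall_notMem]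
      intro n h
      obtain ⟨c, -, hM⟩ := main_sound M hNA h
      exact hne ⟨c, hM⟩
    show sInf _ ≤ _
    rw [hBempty, Nat.sInf_empty]
    exact Nat.zero_le _

theorem cost_ge (M : A2DA A Q) [Fintype Q] (hE : M.EpsFree) (hNA : M.NonAlternating)
    (w : List A) :
    M.cost w ≤ 3 * (Fintype.card Q ^ 2 + Fintype.card Q) ^
      ((Fintype.card Q ^ 2 + Fintype.card Q) * (B M).cost w) := by
  have hm : 1 ≤ Fintype.card Q := by
    have : Nonempty Q := ⟨M.init⟩
    exact Fintype.card_pos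
  have hk : 2 ≤ Fintype.card Q ^ 2 + Fintype.card Q := by nlinarith
  by_cases hBne : {n | A2DA.Acc (B M) w (B M).init 0 n}.Nonempty
  · have hmem : A2DA.Acc (B M) w (B M).init 0 ((B M).cost w) := Nat.sInf_mem hBne
    obtain ⟨c, hc, hM⟩ := main_sound M hNA hmem
    have h1 : M.cost w ≤ c := Nat.sInf_le hM
    have h2 := arith_bound hk ((B M).cost w)
    omega
  · have hMempty : {n | A2DA.Acc M w M.init 0 n} = ∅ := by
      rw [Set.eq_empty_iff_forall_notMem]
      intro n h
      exact hBne ⟨n, main_complete M hE hNA h⟩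
    show sInf _ ≤ _
    rw [hMempty, Nat.sInf_empty]
    exact Nat.zero_le _

end Construction

/-- For every 2DA `M` with state set `Q` there is an ADA^ε `B` over the
same alphabet with a number of states polynomial in `|Q|`, accepting the same language,
such that `cost_B w ≤ cost_M w ≤ 3·k^(k·cost_B w)` for every word `w`, where
`k = |Q|² + |Q|`.  Consequently, `M` is limited iff `B` is limited. -/
theorem twoWayDA_to_adaEps :
    ∃ p : Polynomial ℕ,
      ∀ (A Q : Type) [Fintype A] [Fintype Q] (M : A2DA A Q),
        M.EpsFree → M.NonAlternating →
        ∃ (Q' : Type) (_ : Fintype Q') (B : A2DA A Q'),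
          B.OneWay ∧
          Fintype.card Q' ≤ p.eval (Fintype.card Q) ∧
          B.accepts = M.accepts ∧
          (∀ w : List A,
            B.cost w ≤ M.cost w ∧
            M.cost w ≤ 3 * (Fintype.card Q ^ 2 + Fintype.card Q) ^
              ((Fintype.card Q ^ 2 + Fintype.card Q) * B.cost w)) ∧
          (M.Limited ↔ B.Limited) := by
  classical
  refine ⟨8 * Polynomial.X ^ 3 + 8 * Polynomial.X ^ 2 + 2 * Polynomial.X, ?_⟩
  intro A Q _ _ M hE hNA
  refine ⟨Construction.St Q × Bool, inferInstance, Construction.B M,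
    Construction.B_oneway M, ?_, Construction.accepts_eq M hE hNA, ?_, ?_⟩
  · have := Construction.card_q' (Q := Q)
    simp only [Polynomial.eval_add, Polynomial.eval_mul, Polynomial.eval_pow,
      Polynomial.eval_ofNat, Polynomial.eval_X]
    omega
  · intro w
    exact ⟨Construction.cost_le M hE hNA w, Construction.cost_ge M hE hNA w⟩
  · constructor
    · rintro ⟨N, hN⟩
      exact ⟨N, fun w => le_trans (Construction.cost_le M hE hNA w) (hN w)⟩
    · rintro ⟨N, hN⟩
      refine ⟨3 * (Fintype.card Q ^ 2 + Fintype.card Q) ^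
        ((Fintype.card Q ^ 2 + Fintype.card Q) * N), fun w => ?_⟩
      refine le_trans (Construction.cost_ge M hE hNA w) ?_
      have hm : 1 ≤ Fintype.card Q := by
        have : Nonempty Q := ⟨M.init⟩
        exact Fintype.card_pos
      have hk : 1 ≤ Fintype.card Q ^ 2 + Fintype.card Q := by nlinarith
      have hexp : (Fintype.card Q ^ 2 + Fintype.card Q) * (Construction.B M).cost w ≤
          (Fintype.card Q ^ 2 + Fintype.card Q) * N :=
        Nat.mul_le_mul_left _ (hN w)
      have := Nat.pow_le_pow_right hk hexp
      omega

end DistAut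
end

section
/- For every n ≥ 1 there exists a 2^n-tiling problem T_n, with tile set and constraint relations of size polynomial in n, such that every solution of T_n uses exactly 2^{2^n} rows (in particular T_n has finitely many solutions) and T_n has at least 2^{2^{2^n}} distinct solutions. -/
namespace RPQ

/-- A `2^n`-tiling problem: a width parameter `n`, a finite set of tiles `Δ`, horizontal
and vertical constraint relations, and starting and final tiles. -/
structure TilingProblem (Δ : Type) where
  n : ℕ
  H : Δ → Δ → Prop
  V : Δ → Δ → Prop
  tS : Δ
  tF : Δ

/-- A solution of a `2^n`-tiling problem: a consistent assignment of tiles to a rectangle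
with `2^n` columns and `k ≥ 1` rows. -/
structure TSolution {Δ : Type} (T : TilingProblem Δ) where
  k : ℕ
  kpos : 0 < k
  f : Fin (2 ^ T.n) → Fin k → Δ
  hfirst : f ⟨0, Nat.two_pow_pos T.n⟩ ⟨0, kpos⟩ = T.tS
  hlast : f ⟨2 ^ T.n - 1, Nat.sub_lt (Nat.two_pow_pos T.n) Nat.one_pos⟩
      ⟨k - 1, Nat.sub_lt kpos Nat.one_pos⟩ = T.tF
  hH : ∀ (i : ℕ) (hi : i + 1 < 2 ^ T.n) (j : Fin k),
      T.H (f ⟨i, Nat.lt_of_succ_lt hi⟩ j) (f ⟨i + 1, hi⟩ j)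
  hV : ∀ (i : Fin (2 ^ T.n)) (j : ℕ) (hj : j + 1 < k),
      T.V (f i ⟨j, Nat.lt_of_succ_lt hj⟩) (f i ⟨j + 1, hj⟩)



/-! ### Tiles -/

structure Tile where
  lft : Bool
  rt : Bool
  fst : Bool
  lst : Bool
  bit : Bool
  cin : Bool
  free : Bool
  deriving DecidableEq

def tileEquiv : Tile ≃ (Bool×Bool×Bool×Bool×Bool×Bool×Bool) where
  toFun t := (t.lft, t.rt, t.fst, t.lst, t.bit, t.cin, t.free)
  invFun t := ⟨t.1, t.2.1, t.2.2.1, t.2.2.2.1, t.2.2.2.2.1, t.2.2.2.2.2.1, t.2.2.2.2.2.2⟩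
  left_inv _ := rfl
  right_inv _ := rfl

instance : Fintype Tile := Fintype.ofEquiv _ tileEquiv.symm

lemma card_tile : Fintype.card Tile = 128 := by
  rw [Fintype.card_congr tileEquiv]; simp

def ok (t : Tile) : Prop :=
  (t.fst = true → t.bit = false) ∧ (t.lst = true → t.bit = true)

def Hrel (a b : Tile) : Prop :=
  b.lft = false ∧ a.rt = false ∧ a.fst = b.fst ∧ a.lst = b.lst ∧
  b.cin = (a.bit && a.cin) ∧ ok a ∧ ok b

def Vrel (a b : Tile) : Prop :=
  b.fst = false ∧ a.lst = false ∧ a.lft = b.lft ∧ a.rt = b.rt ∧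
  b.bit = (a.bit ^^ a.cin) ∧ (b.lft = true → b.cin = true) ∧
  (a.rt = true → (a.bit && a.cin) = false)

def tileS : Tile := ⟨true, false, true, false, false, true, false⟩
def tileF : Tile := ⟨false, true, false, true, true, true, false⟩

def Tprob (n : ℕ) : TilingProblem Tile := ⟨n, Hrel, Vrel, tileS, tileF⟩

/-! ### Bit arithmetic lemmas -/

lemma odd_not_dvd (i a : ℕ) : ¬ (2^(i+1) ∣ (2*a+1)) := by
  intro h
  have h2 : (2:ℕ) ∣ 2^(i+1) := dvd_pow_self 2 (Nat.succ_ne_zero i)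
  have h3 : (2:ℕ) ∣ 2*a+1 := dvd_trans h2 h
  omega

lemma dvd_half (i a : ℕ) : (2^(i+1) ∣ 2*a) ↔ (2^i ∣ a) := by
  rw [pow_succ, mul_comm (2^i) 2]
  exact mul_dvd_mul_iff_left (two_ne_zero)

lemma L1 : ∀ i j : ℕ, decide (2^(i+1) ∣ (j+1)) = (Nat.testBit j i && decide (2^i ∣ (j+1))) := by
  intro i
  induction i with
  | zero =>
    intro j
    rw [Nat.testBit_zero]
    rcases Nat.mod_two_eq_zero_or_one j with h | h
    · have h2 : ¬ ((2:ℕ)^1 ∣ j+1) := by simp; omega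
      have h3 : ¬ (j % 2 = 1) := by omega
      simp [h2, h3]; omega
    · have h2 : ((2:ℕ)^1 ∣ j+1) := by simp; omega
      simp [h2, h]; omega
  | succ i ih =>
    intro j
    rcases Nat.mod_two_eq_zero_or_one j with h | h
    · obtain ⟨a, ha⟩ : ∃ a, j = 2*a := ⟨j/2, by omega⟩
      subst ha
      have h2 : ¬ (2^(i+1+1) ∣ (2*a+1)) := odd_not_dvd (i+1) a
      have h3 : ¬ (2^(i+1) ∣ (2*a+1)) := odd_not_dvd i a
      simp [h2, h3]
    · obtain ⟨a, ha⟩ : ∃ a, j = 2*a+1 := ⟨j/2, by omega⟩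
      subst ha
      have e1 : (2^(i+1+1) ∣ (2*a+1+1)) ↔ (2^(i+1) ∣ (a+1)) := by
        rw [show 2*a+1+1 = 2*(a+1) by ring]; exact dvd_half (i+1) (a+1)
      have e2 : (2^(i+1) ∣ (2*a+1+1)) ↔ (2^i ∣ (a+1)) := by
        rw [show 2*a+1+1 = 2*(a+1) by ring]; exact dvd_half i (a+1)
      have e3 : Nat.testBit (2*a+1) (i+1) = Nat.testBit a i := by
        rw [Nat.testBit_succ]; congr 1; omega
      rw [decide_eq_decide.mpr e1, decide_eq_decide.mpr e2, e3, ← ih a]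

lemma L2 : ∀ i j : ℕ, Nat.testBit (j+1) i = (Nat.testBit j i).xor (decide (2^i ∣ (j+1))) := by
  intro i
  induction i with
  | zero =>
    intro j
    have h0 : ((2:ℕ)^0 ∣ j+1) := by simp
    rw [Nat.testBit_zero, Nat.testBit_zero, decide_eq_true_eq.mpr h0]
    rcases Nat.mod_two_eq_zero_or_one j with h | h
    · have h4 : (j+1) % 2 = 1 := by omega
      simp [h, h4]
    · have h4 : ¬ ((j+1) % 2 = 1) := by omega
      simp [h, h4]
  | succ i ih =>
    intro j
    rcases Nat.mod_two_eq_zero_or_one j with h | h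
    · obtain ⟨a, ha⟩ : ∃ a, j = 2*a := ⟨j/2, by omega⟩
      subst ha
      have h2 : ¬ (2^(i+1) ∣ (2*a+1)) := odd_not_dvd i a
      rw [Nat.testBit_succ, Nat.testBit_succ]
      have e1 : (2*a+1)/2 = a := by omega
      have e2 : (2*a)/2 = a := by omega
      simp [h2, e1, e2]
    · obtain ⟨a, ha⟩ : ∃ a, j = 2*a+1 := ⟨j/2, by omega⟩
      subst ha
      have e1 : (2^(i+1) ∣ (2*a+1+1)) ↔ (2^i ∣ (a+1)) := by
        rw [show 2*a+1+1 = 2*(a+1) by ring]; exact dvd_half i (a+1)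
      rw [Nat.testBit_succ, Nat.testBit_succ]
      have e2 : (2*a+1+1)/2 = a+1 := by omega
      have e3 : (2*a+1)/2 = a := by omega
      rw [e2, e3, decide_eq_decide.mpr e1, ih a]

lemma geom (w : ℕ) : (∑ i ∈ Finset.range w, 2^i) = 2^w - 1 := by
  induction w with
  | zero => simp
  | succ w ih =>
    rw [Finset.sum_range_succ, ih, pow_succ]
    have := Nat.one_le_two_pow (n := w)
    omega

lemma incr_aux (b b' c : ℕ → Bool) (w : ℕ)
    (h0 : c 0 = true)
    (hc : ∀ i, i < w → c (i+1) = (b i && c i))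
    (hb : ∀ i, i < w → b' i = (b i ^^ c i)) :
    ∀ m, m ≤ w →
      (∑ i ∈ Finset.range m, (b' i).toNat * 2^i) + (c m).toNat * 2^m
        = (∑ i ∈ Finset.range m, (b i).toNat * 2^i) + 1 := by
  intro m
  induction m with
  | zero => simp [h0]
  | succ m ih =>
    intro hm
    have hmw : m < w := hm
    have ihm := ih (le_of_lt hmw)
    rw [Finset.sum_range_succ, Finset.sum_range_succ, hb m hmw, hc m hmw]
    have key : ((b m ^^ c m)).toNat * 2^m + (b m && c m).toNat * 2^(m+1)
        = (b m).toNat * 2^m + (c m).toNat * 2^m := by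
      cases hbm : b m <;> cases hcm : c m <;> simp [pow_succ] <;> ring
    omega

lemma incr (b b' c : ℕ → Bool) (w : ℕ)
    (h0 : c 0 = true) (hw : c w = false)
    (hc : ∀ i, i < w → c (i+1) = (b i && c i))
    (hb : ∀ i, i < w → b' i = (b i ^^ c i)) :
    (∑ i ∈ Finset.range w, (b' i).toNat * 2^i)
      = (∑ i ∈ Finset.range w, (b i).toNat * 2^i) + 1 := by
  have := incr_aux b b' c w h0 hc hb w le_rfl
  rw [hw] at this
  simpa using this

/-! ### Every solution has `2^(2^n)` rows -/

lemma rows_eq (n : ℕ) (hn : 1 ≤ n) (s : TSolution (Tprob n)) : s.k = 2 ^ 2 ^ n := by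
  have hw2 : 2 ≤ 2^n := by
    calc 2 = 2^1 := rfl
    _ ≤ 2^n := Nat.pow_le_pow_right (by norm_num) hn
  have wpos : 0 < 2^n := Nat.two_pow_pos n
  have kpos := s.kpos
  -- column 0 : lft and cin are true
  have col0 : ∀ j (hj : j < s.k),
      (s.f ⟨0, wpos⟩ ⟨j, hj⟩).lft = true ∧ (s.f ⟨0, wpos⟩ ⟨j, hj⟩).cin = true := by
    intro j
    induction j with
    | zero =>
      intro hj
      have e : (⟨0, hj⟩ : Fin s.k) = ⟨0, kpos⟩ := rfl
      rw [e, s.hfirst]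
      exact ⟨rfl, rfl⟩
    | succ j ih =>
      intro hj
      have hj' : j < s.k := by omega
      obtain ⟨h1, h2, h3, h4, h5, h6, h7⟩ := s.hV ⟨0, wpos⟩ j hj
      obtain ⟨l, c⟩ := ih hj'
      have hl : (s.f ⟨0, wpos⟩ ⟨j+1, hj⟩).lft = true := by rw [← h3]; exact l
      exact ⟨hl, h6 hl⟩
  -- column 2^n - 1 : rt is true
  have rtcol : ∀ d j (hj : j < s.k), j + d = s.k - 1 →
      (s.f ⟨2^n - 1, Nat.sub_lt wpos Nat.one_pos⟩ ⟨j, hj⟩).rt = true := by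
    intro d
    induction d with
    | zero =>
      intro j hj he
      have e : (⟨j, hj⟩ : Fin s.k) = ⟨s.k - 1, Nat.sub_lt kpos Nat.one_pos⟩ := by
        apply Fin.ext; simp; omega
      rw [e]
      exact congrArg Tile.rt s.hlast
    | succ d ih =>
      intro j hj he
      have hj1 : j + 1 < s.k := by omega
      obtain ⟨h1, h2, h3, h4, h5, h6, h7⟩ := s.hV ⟨2^n - 1, Nat.sub_lt wpos Nat.one_pos⟩ j hj1
      have := ih (j+1) hj1 (by omega)
      rw [h4]
      exact this
  -- row 0 : fst is true
  have fstrow : ∀ i (hi : i < 2^n), (s.f ⟨i, hi⟩ ⟨0, kpos⟩).fst = true := by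
    intro i
    induction i with
    | zero =>
      intro hi
      have e : (⟨0, hi⟩ : Fin (2^(Tprob n).n)) = ⟨0, wpos⟩ := rfl
      rw [e, s.hfirst]; rfl
    | succ i ih =>
      intro hi
      obtain ⟨h1, h2, h3, h4, h5, h6, h7⟩ := s.hH i hi ⟨0, kpos⟩
      rw [← h3]
      exact ih (by omega)
  -- row s.k - 1 : lst is true
  have lstrow : ∀ i (hi : i < 2^n),
      (s.f ⟨i, hi⟩ ⟨s.k - 1, Nat.sub_lt kpos Nat.one_pos⟩).lst = true := by
    have main : ∀ d i (hi : i < 2^n), i + d = 2^n - 1 →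
        (s.f ⟨i, hi⟩ ⟨s.k - 1, Nat.sub_lt kpos Nat.one_pos⟩).lst = true := by
      intro d
      induction d with
      | zero =>
        intro i hi he
        have e : (⟨i, hi⟩ : Fin (2^(Tprob n).n)) = ⟨2^n - 1, Nat.sub_lt wpos Nat.one_pos⟩ := by
          apply Fin.ext; simp; omega
        rw [e]
        exact congrArg Tile.lst s.hlast
      | succ d ih =>
        intro i hi he
        have hi1 : i + 1 < 2^n := by omega
        obtain ⟨h1, h2, h3, h4, h5, h6, h7⟩ := s.hH i hi1 ⟨s.k - 1, Nat.sub_lt kpos Nat.one_pos⟩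
        rw [h4]
        exact ih (i+1) hi1 (by omega)
    intro i hi
    exact main (2^n - 1 - i) i hi (by omega)
  -- every tile satisfies ok
  have okall : ∀ i (hi : i < 2^n) (j : Fin s.k), ok (s.f ⟨i, hi⟩ j) := by
    intro i hi j
    rcases lt_or_ge (i+1) (2^n) with h | h
    · exact (s.hH i h j).2.2.2.2.2.1
    · have h2 : (2^n - 2) + 1 < 2^n := by omega
      have hb := (s.hH (2^n - 2) h2 j).2.2.2.2.2.2
      have e : (⟨2^n - 2 + 1, h2⟩ : Fin (2^(Tprob n).n)) = ⟨i, hi⟩ := by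
        apply Fin.ext; simp; omega
      rw [e] at hb
      exact hb
  -- bits of row 0 are all false
  have bit0 : ∀ i (hi : i < 2^n), (s.f ⟨i, hi⟩ ⟨0, kpos⟩).bit = false :=
    fun i hi => (okall i hi _).1 (fstrow i hi)
  -- bits of row s.k - 1 are all true
  have bitlast : ∀ i (hi : i < 2^n),
      (s.f ⟨i, hi⟩ ⟨s.k - 1, Nat.sub_lt kpos Nat.one_pos⟩).bit = true :=
    fun i hi => (okall i hi _).2 (lstrow i hi)
  -- total bit/carry functions
  set Bf : ℕ → ℕ → Bool := fun i j =>
    if h : i < 2^n ∧ j < s.k then (s.f ⟨i, h.1⟩ ⟨j, h.2⟩).bit else false with hBf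
  set Cf : ℕ → ℕ → Bool := fun i j =>
    if h : i < 2^n ∧ j < s.k then (s.f ⟨i, h.1⟩ ⟨j, h.2⟩).cin else false with hCf
  have Bfeq : ∀ i (hi : i < 2^n) j (hj : j < s.k), Bf i j = (s.f ⟨i, hi⟩ ⟨j, hj⟩).bit := by
    intro i hi j hj; rw [hBf]; simp only [dif_pos (⟨hi, hj⟩ : i < 2^n ∧ j < s.k)]
  have Cfeq : ∀ i (hi : i < 2^n) j (hj : j < s.k), Cf i j = (s.f ⟨i, hi⟩ ⟨j, hj⟩).cin := by
    intro i hi j hj; rw [hCf]; simp only [dif_pos (⟨hi, hj⟩ : i < 2^n ∧ j < s.k)]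
  -- one row increments the counter
  have vstep : ∀ j, j + 1 < s.k →
      (∑ i ∈ Finset.range (2^n), (Bf i (j+1)).toNat * 2^i)
        = (∑ i ∈ Finset.range (2^n), (Bf i j).toNat * 2^i) + 1 := by
    intro j hj
    have hj' : j < s.k := by omega
    apply incr (fun i => Bf i j) (fun i => Bf i (j+1))
      (fun i => if i < 2^n then Cf i j else (Bf (2^n - 1) j && Cf (2^n - 1) j)) (2^n)
    · -- c 0 = true
      simp only [if_pos wpos]
      rw [Cfeq 0 wpos j hj']
      exact (col0 j hj').2
    · -- c (2^n) = false (no overflow)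
      simp only [if_neg (lt_irrefl (2^n))]
      rw [Bfeq (2^n-1) (Nat.sub_lt wpos Nat.one_pos) j hj',
          Cfeq (2^n-1) (Nat.sub_lt wpos Nat.one_pos) j hj']
      obtain ⟨h1, h2, h3, h4, h5, h6, h7⟩ :=
        s.hV ⟨2^n - 1, Nat.sub_lt wpos Nat.one_pos⟩ j hj
      exact h7 (rtcol (s.k - 1 - j) j hj' (by omega))
    · -- carry recurrence
      intro i hi
      simp only [if_pos hi]
      rcases lt_or_ge (i+1) (2^n) with h | h
      · simp only [if_pos h]
        rw [Cfeq (i+1) h j hj', Bfeq i (Nat.lt_of_succ_lt h) j hj',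
            Cfeq i (Nat.lt_of_succ_lt h) j hj']
        exact (s.hH i h ⟨j, hj'⟩).2.2.2.2.1
      · have hieq : i = 2^n - 1 := by omega
        simp only [if_neg (by omega : ¬ (i+1 < 2^n))]
        subst hieq
        rfl
    · -- bit update
      intro i hi
      simp only [if_pos hi]
      rw [Bfeq i hi (j+1) hj, Bfeq i hi j hj', Cfeq i hi j hj']
      exact (s.hV ⟨i, hi⟩ j hj).2.2.2.2.1
  -- counter value of row j equals j
  have vj : ∀ j, j < s.k → (∑ i ∈ Finset.range (2^n), (Bf i j).toNat * 2^i) = j := by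
    intro j
    induction j with
    | zero =>
      intro hj
      apply Finset.sum_eq_zero
      intro i hi
      rw [Finset.mem_range] at hi
      rw [Bfeq i hi 0 kpos, bit0 i hi]
      simp
    | succ j ih =>
      intro hj
      rw [vstep j hj, ih (by omega)]
  -- last row is all ones
  have vlast : (∑ i ∈ Finset.range (2^n), (Bf i (s.k - 1)).toNat * 2^i) = 2^(2^n) - 1 := by
    rw [← geom (2^n)]
    apply Finset.sum_congr rfl
    intro i hi
    rw [Finset.mem_range] at hi
    rw [Bfeq i hi (s.k - 1) (Nat.sub_lt kpos Nat.one_pos), bitlast i hi]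
    simp
  have := vj (s.k - 1) (Nat.sub_lt kpos Nat.one_pos)
  rw [vlast] at this
  have hpow : 1 ≤ 2^(2^n) := Nat.one_le_two_pow
  omega


/-! ### Canonical solutions -/

lemma two_le_two_pow {n : ℕ} (hn : 1 ≤ n) : 2 ≤ 2^n := by
  calc 2 = 2^1 := rfl
  _ ≤ 2^n := Nat.pow_le_pow_right (by norm_num) hn

def mkSol (n : ℕ) (hn : 1 ≤ n) (h : Fin (2^(2^n)) → Bool) : TSolution (Tprob n) where
  k := 2^(2^n)
  kpos := Nat.two_pow_pos _
  f := fun i j =>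
    ⟨decide (i.val = 0), decide (i.val = 2^n - 1), decide (j.val = 0),
     decide (j.val = 2^(2^n) - 1), Nat.testBit j.val i.val, decide (2^(i.val) ∣ (j.val+1)),
     if i.val = 0 then (if j.val = 0 then false else h j) else
       if i.val = 1 ∧ j.val = 0 then h ⟨0, Nat.two_pow_pos _⟩ else false⟩
  hfirst := by
    have h1 : ¬ ((0:ℕ) = 2^n - 1) := by have := two_le_two_pow hn; omega
    have h2 : ¬ ((0:ℕ) = 2^(2^n) - 1) := by
      have := two_le_two_pow (Nat.one_le_two_pow (n := n)); omega
    simp [tileS, Tprob, h1, h2]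
  hlast := by
    have hw2 : 2 ≤ 2^n := two_le_two_pow hn
    have hk2 : 2 ≤ 2^(2^n) := two_le_two_pow (Nat.one_le_two_pow (n := n))
    have h1 : ¬ (2^n - 1 = 0) := by omega
    have h2 : ¬ (2^(2^n) - 1 = 0) := by omega
    have h3 : 2^(2^n) - 1 + 1 = 2^(2^n) := by omega
    have h4 : (2:ℕ)^(2^n - 1) ∣ 2^(2^n) := pow_dvd_pow 2 (Nat.sub_le _ _)
    have h5 : Nat.testBit (2^(2^n) - 1) (2^n - 1) = true := by
      rw [Nat.testBit_two_pow_sub_one]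
      simp
    simp [tileF, Tprob, show (Tprob n).n = n from rfl, h1, h2, h3, h4, h5]
  hH := by
    intro i hi j
    have hi' : i + 1 < 2^n := hi
    refine ⟨by simp, ?_, rfl, rfl, L1 i j.val, ⟨?_, ?_⟩, ⟨?_, ?_⟩⟩
    · show decide (i = 2^n - 1) = false
      simp only [decide_eq_false_iff_not]; omega
    · intro hfst
      have hj0 : (j : ℕ) = 0 := of_decide_eq_true hfst
      show Nat.testBit (j : ℕ) i = false
      rw [hj0, Nat.zero_testBit]
    · intro hlst
      have hjl : (j : ℕ) = 2^(2^n) - 1 := of_decide_eq_true hlst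
      show Nat.testBit (j : ℕ) i = true
      rw [hjl, Nat.testBit_two_pow_sub_one]
      simp only [decide_eq_true_eq]; omega
    · intro hfst
      have hj0 : (j : ℕ) = 0 := of_decide_eq_true hfst
      show Nat.testBit (j : ℕ) (i+1) = false
      rw [hj0, Nat.zero_testBit]
    · intro hlst
      have hjl : (j : ℕ) = 2^(2^n) - 1 := of_decide_eq_true hlst
      show Nat.testBit (j : ℕ) (i+1) = true
      rw [hjl, Nat.testBit_two_pow_sub_one]
      simp only [decide_eq_true_eq]; omega
  hV := by
    intro i j hj
    have hiv : (i : ℕ) < 2^n := i.isLt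
    refine ⟨by simp, ?_, rfl, rfl, L2 i.val j, ?_, ?_⟩
    · show decide (j = 2^(2^n) - 1) = false
      simp only [decide_eq_false_iff_not]; omega
    · intro hl
      have h0 : (i : ℕ) = 0 := of_decide_eq_true hl
      show decide (2^(i:ℕ) ∣ (j+1)+1) = true
      rw [h0]
      simp
    · intro hr
      have hie : (i : ℕ) = 2^n - 1 := of_decide_eq_true hr
      show (Nat.testBit j (i:ℕ) && decide (2^(i:ℕ) ∣ j+1)) = false
      have e : 2^n - 1 + 1 = 2^n := by have := Nat.two_pow_pos n; omega
      rw [hie, ← L1 (2^n - 1) j, e]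
      simp only [decide_eq_false_iff_not]
      intro hd
      have := Nat.le_of_dvd (by omega) hd
      omega

lemma mkSol_injective (n : ℕ) (hn : 1 ≤ n) : Function.Injective (mkSol n hn) := by
  intro h1 h2 he
  have h1n : 1 < 2^n := two_le_two_pow hn
  funext j
  rcases eq_or_ne j.val 0 with hj0 | hj0
  · have hc := congrArg
      (fun s : TSolution (Tprob n) => (s.f ⟨1, h1n⟩ ⟨0, s.kpos⟩).free) he
    simp only [mkSol] at hc
    have hj : j = ⟨0, Nat.two_pow_pos _⟩ := Fin.ext hj0
    rw [hj]
    simpa using hc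
  · have hc := congrArg
      (fun s : TSolution (Tprob n) =>
        if hs : j.val < s.k then (s.f ⟨0, Nat.two_pow_pos n⟩ ⟨j.val, hs⟩).free else false) he
    simp only [mkSol] at hc
    rw [dif_pos j.isLt, dif_pos j.isLt] at hc
    simp only [if_pos rfl, if_neg hj0, Fin.eta] at hc
    exact hc

lemma sol_finite (n : ℕ) (hn : 1 ≤ n) : Finite (TSolution (Tprob n)) := by
  apply Finite.of_injective (fun s : TSolution (Tprob n) =>
    (fun (i : Fin (2^n)) (j : Fin (2^(2^n))) =>
      if hs : j.val < s.k then s.f i ⟨j.val, hs⟩ else tileS))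
  intro s1 s2 hE
  obtain ⟨k1, p1, f1, a1, b1, c1, d1⟩ := s1
  obtain ⟨k2, p2, f2, a2, b2, c2, d2⟩ := s2
  have e1 : k1 = 2^(2^n) := rows_eq n hn ⟨k1, p1, f1, a1, b1, c1, d1⟩
  have e2 : k2 = 2^(2^n) := rows_eq n hn ⟨k2, p2, f2, a2, b2, c2, d2⟩
  subst e1
  subst e2
  have hf : f1 = f2 := by
    funext i j
    have hc := congrFun (congrFun hE i) j
    simp only [dif_pos j.isLt, Fin.eta] at hc
    exact hc
  subst hf
  rfl

/-- For every `n ≥ 1` there is a `2^n`-tiling problem `T_n`, with tile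
set (and hence constraint relations) of size polynomial in `n`, such that every solution
of `T_n` has exactly `2^(2^n)` rows (in particular `T_n` has finitely many solutions) and
`T_n` has at least `2^(2^(2^n))` distinct solutions. -/
theorem tiling_triple_exponentially_many_solutions :
    ∃ p : Polynomial ℕ,
      ∀ n : ℕ, 1 ≤ n →
        ∃ (Δ : Type) (_ : Fintype Δ) (T : TilingProblem Δ),
          T.n = n ∧
          Fintype.card Δ ≤ p.eval n ∧
          (∀ s : TSolution T, s.k = 2 ^ 2 ^ n) ∧
          Finite (TSolution T) ∧
          2 ^ 2 ^ 2 ^ n ≤ Nat.card (TSolution T) := by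
  refine ⟨Polynomial.C 128, ?_⟩
  intro n hn
  refine ⟨Tile, inferInstance, Tprob n, rfl, ?_, rows_eq n hn, sol_finite n hn, ?_⟩
  · rw [card_tile]; simp
  · haveI := sol_finite n hn
    have hle := Nat.card_le_card_of_injective (mkSol n hn) (mkSol_injective n hn)
    have hcard : Nat.card (Fin (2^(2^n)) → Bool) = 2^(2^(2^n)) := by
      simp [Nat.card_eq_fintype_card]
    rw [hcard] at hle
    exact hle

end RPQ
end
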